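/- arXiv:0902.3298 — 14 statements merged into one kernel-verified Lean document; each statement's English description precedes it below -/
import Mathlib

section
/- Let a ≤ -1 be a real number and define f_a(x) = ((a + √(1 + x²))·arctan x)/x for x > 0. Then f_a is strictly increasing on (0, ∞). -/
open Real Set

lemma aux_arctan_lower {x : ℝ} (hx : 0 < x) : x / (1 + x ^ 2) < Real.arctan x := by
  set θ := Real.arctan x with hθ
  have hθ1 : 0 < θ := (by have h := Real.arctan_strictMono hx; rwa [Real.arctan_zero] at h)
  have hθ2 : θ < π / 2 := Real.arctan_lt_pi_div_two x
  have h1x : (0:ℝ) < 1 + x ^ 2 := by positivity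
  have hsc : Real.sin θ * Real.cos θ = x / (1 + x ^ 2) := by
    rw [hθ, Real.sin_arctan, Real.cos_arctan]
    rw [div_mul_div_comm, mul_one, Real.mul_self_sqrt h1x.le]
  have hsin : Real.sin θ < θ := Real.sin_lt hθ1
  have hsinpos : 0 < Real.sin θ := Real.sin_pos_of_pos_of_lt_pi hθ1 (by linarith [Real.pi_pos])
  have hcos : Real.cos θ ≤ 1 := Real.cos_le_one θ
  calc x / (1 + x ^ 2) = Real.sin θ * Real.cos θ := hsc.symm
    _ ≤ Real.sin θ := by nlinarith
    _ < θ := hsin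

lemma aux_arctan_upper {x : ℝ} (hx : 0 < x) : Real.arctan x < x := by
  have hθ1 : 0 < Real.arctan x := (by simpa using Real.arctan_strictMono hx)
  have := Real.lt_tan hθ1 (Real.arctan_lt_pi_div_two x)
  rwa [Real.tan_arctan] at this

theorem shafer_f_strictMono_of_le_neg_one (a : ℝ) (ha : a ≤ -1) :
    StrictMonoOn (fun x : ℝ => ((a + Real.sqrt (1 + x ^ 2)) * Real.arctan x) / x)
      (Set.Ioi (0 : ℝ)) := by
  apply strictMonoOn_of_deriv_pos (convex_Ioi 0)
  · apply ContinuousOn.div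
    · exact (((continuous_const.add (Real.continuous_sqrt.comp (by continuity))).mul
        Real.continuous_arctan)).continuousOn
    · exact continuousOn_id
    · exact fun x hx => ne_of_gt hx
  · intro x hx
    rw [interior_Ioi] at hx
    have hx0 : (0:ℝ) < x := hx
    have h1x : (0:ℝ) < 1 + x ^ 2 := by positivity
    set s := Real.sqrt (1 + x ^ 2) with hs_def
    have hs : 0 < s := Real.sqrt_pos.mpr h1x
    have hs2 : s ^ 2 = 1 + x ^ 2 := Real.sq_sqrt h1x.le
    have hsq : HasDerivAt (fun x : ℝ => a + Real.sqrt (1 + x ^ 2)) (x / s) x := by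
      have hu : HasDerivAt (fun x : ℝ => 1 + x ^ 2) (2 * x) x := by
        simpa using ((hasDerivAt_pow 2 x).const_add 1)
      have h := ((Real.hasDerivAt_sqrt (ne_of_gt h1x)).comp x hu).const_add a
      refine h.congr_deriv ?_
      rw [hs_def]
      field_simp
    have hmul := hsq.mul (Real.hasDerivAt_arctan x)
    have hdiv := hmul.div (hasDerivAt_id x) (ne_of_gt hx0)
    simp only [id_eq, Pi.mul_apply] at hdiv
    rw [show (fun x : ℝ => (a + √(1 + x ^ 2)) * arctan x / x) = (fun x => a + √(1 + x ^ 2)) * arctan / id from rfl, hdiv.deriv]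
    have ht : 0 < Real.arctan x := (by have h := Real.arctan_strictMono hx0; rwa [Real.arctan_zero] at h)
    have hlow := aux_arctan_lower hx0
    have hup := aux_arctan_upper hx0
    set t := Real.arctan x with ht_def
    apply div_pos
    · have hN : (x / s * t + (a + s) * (1 / (1 + x ^ 2))) * x - (a + s) * t * 1
          = (a * (x - t * (1 + x ^ 2)) + s * (x - t)) / (1 + x ^ 2) := by
        rw [← hs2]
        field_simp
        linear_combination (-(t * s)) * hs2
      rw [hN]
      apply div_pos _ h1x
      have h1 : 0 ≤ -(a + 1) := by linarith
      have h2 : 0 ≤ t * (1 + x ^ 2) - x := by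
        have := (div_lt_iff₀ h1x).mp hlow
        linarith
      nlinarith [mul_pos hs (sub_pos.mpr hup), mul_nonneg h1 h2]
    · simpa using pow_pos hx0 2
end

section
/- Let a be a real number with 0 ≤ a ≤ 1/2 and define f_a(x) = ((a + √(1 + x²))·arctan x)/x for x > 0. Then f_a is strictly increasing on (0, ∞). -/
open Real

lemma trig_aux (θ : ℝ) (h1 : 0 < θ) (h2 : θ < π/2) :
    θ * (1 + 2 * Real.cos θ) < Real.sin θ * (2 + Real.cos θ) := by
  set g : ℝ → ℝ := fun y => Real.sin y * (2 + Real.cos y) - y * (1 + 2 * Real.cos y) with hg_def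
  have hg : ∀ y : ℝ, HasDerivAt g (2 * Real.sin y * (y - Real.sin y)) y := by
    intro y
    have h1' : HasDerivAt (fun y => Real.sin y * (2 + Real.cos y))
        (Real.cos y * (2 + Real.cos y) + Real.sin y * (-Real.sin y)) y :=
      (Real.hasDerivAt_sin y).mul ((Real.hasDerivAt_cos y).const_add 2)
    have h2' : HasDerivAt (fun y => y * (1 + 2 * Real.cos y))
        (1 * (1 + 2 * Real.cos y) + y * (2 * (-Real.sin y))) y :=
      (hasDerivAt_id y).mul (((Real.hasDerivAt_cos y).const_mul 2).const_add 1)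
    have := h1'.sub h2'
    refine this.congr_deriv ?_
    linear_combination (1 : ℝ) * Real.sin_sq_add_cos_sq y
  have mono : StrictMonoOn g (Set.Icc 0 (π/2)) := by
    apply strictMonoOn_of_deriv_pos (convex_Icc _ _)
    · exact Continuous.continuousOn (by continuity)
    · intro y hy
      rw [interior_Icc] at hy
      rw [(hg y).deriv]
      have hsy : 0 < Real.sin y :=
        Real.sin_pos_of_pos_of_lt_pi hy.1 (lt_trans hy.2 (by linarith [Real.pi_pos]))
      have hlt := Real.sin_lt hy.1
      apply mul_pos (by linarith) (by linarith)
  have h0 : (0:ℝ) ∈ Set.Icc (0:ℝ) (π/2) := ⟨le_refl _, by linarith [Real.pi_pos]⟩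
  have hθ : θ ∈ Set.Icc (0:ℝ) (π/2) := ⟨h1.le, h2.le⟩
  have := mono h0 hθ h1
  simp [hg_def] at this
  linarith

lemma key_ineq (x : ℝ) (hx : 0 < x) :
    Real.arctan x * (Real.sqrt (1 + x ^ 2) * (Real.sqrt (1 + x ^ 2) + 2)) < x * (1 + 2 * Real.sqrt (1 + x ^ 2)) := by
  set s := Real.sqrt (1 + x ^ 2) with hs_def
  have hs0 : 0 < s := Real.sqrt_pos.2 (by positivity)
  set θ := Real.arctan x with hθ_def
  have hθ1 : 0 < θ := by rw [hθ_def, ← Real.arctan_zero]; exact Real.arctan_strictMono hx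
  have hθ2 : θ < π/2 := Real.arctan_lt_pi_div_two x
  have htrig := trig_aux θ hθ1 hθ2
  rw [hθ_def, Real.cos_arctan, Real.sin_arctan] at htrig
  have h := mul_lt_mul_of_pos_right htrig (show (0:ℝ) < s^2 by positivity)
  calc θ * (s * (s + 2)) = θ * (1 + 2 * (1 / s)) * s ^ 2 := by field_simp
    _ < x / s * (2 + 1 / s) * s ^ 2 := h
    _ = x * (1 + 2 * s) := by field_simp; ring

theorem shafer_f_strictMono_of_mem_Icc (a : ℝ) (ha0 : 0 ≤ a) (ha1 : a ≤ 1 / 2) :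
    StrictMonoOn (fun x : ℝ => ((a + Real.sqrt (1 + x ^ 2)) * Real.arctan x) / x)
      (Set.Ioi (0 : ℝ)) := by
  apply strictMonoOn_of_deriv_pos (convex_Ioi 0)
  · apply ContinuousOn.div
    · exact Continuous.continuousOn (by continuity)
    · exact continuousOn_id
    · intro x hx; exact ne_of_gt hx
  · intro x hx
    rw [interior_Ioi] at hx
    have hx' : (0:ℝ) < x := hx
    set s := Real.sqrt (1 + x ^ 2) with hs_def
    have hs0 : 0 < s := Real.sqrt_pos.2 (by positivity)
    have hs2 : s ^ 2 = 1 + x ^ 2 := Real.sq_sqrt (by positivity)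
    set t := Real.arctan x with ht_def
    have ht0 : 0 < t := by rw [ht_def, ← Real.arctan_zero]; exact Real.arctan_strictMono hx'
    -- derivative computation
    have hu : HasDerivAt (fun y : ℝ => 1 + y ^ 2) (2 * x) x := by
      simpa using ((hasDerivAt_pow 2 x).const_add 1)
    have hsqrt : HasDerivAt (fun y : ℝ => Real.sqrt (1 + y ^ 2)) (x / s) x := by
      have h := (Real.hasDerivAt_sqrt (show (1:ℝ) + x ^ 2 ≠ 0 by positivity)).comp x hu
      refine h.congr_deriv ?_
      rw [← hs_def]
      field_simp
    have hN : HasDerivAt (fun y : ℝ => (a + Real.sqrt (1 + y ^ 2)) * Real.arctan y)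
        (x / s * t + (a + s) * (1 / (1 + x ^ 2))) x :=
      (hsqrt.const_add a).mul (Real.hasDerivAt_arctan x)
    have hf : HasDerivAt (fun y : ℝ => ((a + Real.sqrt (1 + y ^ 2)) * Real.arctan y) / y)
        (((x / s * t + (a + s) * (1 / (1 + x ^ 2))) * x - (a + s) * t * 1) / x ^ 2) x :=
      hN.div (hasDerivAt_id x) hx'.ne'
    rw [hf.deriv]
    apply div_pos _ (by positivity)
    -- key inequality with parameter a
    have key := key_ineq x hx'
    rw [← hs_def, ← ht_def] at key
    have ha2 : (0:ℝ) ≤ 1 - 2 * a := by linarith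
    have hdiff : x * (a + s) * (s + 2) - x * (1 + 2 * s) * (a * s + 1) = x * (1 - 2 * a) * x ^ 2 := by
      linear_combination (x * (1 - 2 * a)) * hs2
    have h3 : 0 ≤ x * (1 - 2 * a) * x ^ 2 := mul_nonneg (mul_nonneg hx'.le ha2) (sq_nonneg x)
    have h2 : x * (1 + 2 * s) * (a * s + 1) ≤ x * (a + s) * (s + 2) := by linarith
    have hpos1 : (0:ℝ) < a * s + 1 := by positivity
    have h4 : t * (s * (s + 2)) * (a * s + 1) < x * (1 + 2 * s) * (a * s + 1) :=
      mul_lt_mul_of_pos_right key hpos1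
    have h5 : t * (s * (a * s + 1)) * (s + 2) < x * (a + s) * (s + 2) := by nlinarith [h4, h2]
    have hkey2 : t * (s * (a * s + 1)) < x * (a + s) :=
      lt_of_mul_lt_mul_right h5 (by positivity)
    have hE : ((x / s * t + (a + s) * (1 / (1 + x ^ 2))) * x - (a + s) * t * 1) * (s * (1 + x ^ 2))
        = (x * (a + s) - t * (s * (a * s + 1))) * s := by
      field_simp
      linear_combination (t * (a * s - x ^ 2)) * hs2
    have hpos : 0 < (x * (a + s) - t * (s * (a * s + 1))) * s := mul_pos (by linarith) hs0
    nlinarith [hpos, hE, mul_pos hs0 (show (0:ℝ) < 1 + x ^ 2 by positivity)]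
end

section
/- Let a be a real number with 1/2 < a < 2/π and define f_a(x) = ((a + √(1 + x²))·arctan x)/x for x > 0. Then f_a has a unique minimum point on (0, ∞): there exists a unique x₀ ∈ (0, ∞) such that f_a(x₀) < f_a(x) for all x ∈ (0, ∞) with x ≠ x₀. -/
open Real Set

noncomputable def Nfun (a θ : ℝ) : ℝ :=
  Real.sin θ + a * Real.sin θ * Real.cos θ - a * θ - θ * Real.cos θ

noncomputable def Gfun (a θ : ℝ) : ℝ := θ * (a * Real.cos θ + 1) / Real.sin θ

lemma hasDerivAt_Nfun (a θ : ℝ) :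
    HasDerivAt (Nfun a) (Real.sin θ * (θ - 2 * a * Real.sin θ)) θ := by
  have h1 : HasDerivAt (fun θ : ℝ => Real.sin θ + a * Real.sin θ * Real.cos θ
      - a * θ - θ * Real.cos θ)
      (Real.cos θ + a * (Real.cos θ * Real.cos θ + Real.sin θ * (-Real.sin θ))
        - a * 1 - (1 * Real.cos θ + θ * (-Real.sin θ))) θ := by
    have hs := Real.hasDerivAt_sin θ
    have hc := Real.hasDerivAt_cos θ
    have h2 : HasDerivAt (fun θ : ℝ => a * Real.sin θ * Real.cos θ)
        (a * Real.cos θ * Real.cos θ + a * Real.sin θ * (-Real.sin θ)) θ :=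
      (hs.const_mul a).mul hc
    have h4 := ((hs.add h2).sub ((hasDerivAt_id θ).const_mul a)).sub ((hasDerivAt_id θ).mul hc)
    exact h4.congr_deriv (by simp only [id_eq]; ring)
  have h3 : Real.cos θ + a * (Real.cos θ * Real.cos θ + Real.sin θ * (-Real.sin θ))
      - a * 1 - (1 * Real.cos θ + θ * (-Real.sin θ))
      = Real.sin θ * (θ - 2 * a * Real.sin θ) := by
    linear_combination a * Real.sin_sq_add_cos_sq θ
  rw [← h3]; exact h1

lemma hasDerivAt_Gfun (a θ : ℝ) (hs : Real.sin θ ≠ 0) :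
    HasDerivAt (Gfun a) (Nfun a θ / (Real.sin θ) ^ 2) θ := by
  have hu : HasDerivAt (fun θ : ℝ => θ * (a * Real.cos θ + 1))
      (1 * (a * Real.cos θ + 1) + θ * (a * -Real.sin θ)) θ :=
    (hasDerivAt_id θ).mul (((Real.hasDerivAt_cos θ).const_mul a).add_const 1)
  have h := hu.div (Real.hasDerivAt_sin θ) hs
  have heq : ((1 * (a * Real.cos θ + 1) + θ * (a * -Real.sin θ)) * Real.sin θ
      - θ * (a * Real.cos θ + 1) * Real.cos θ) / Real.sin θ ^ 2
      = Nfun a θ / (Real.sin θ) ^ 2 := by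
    congr 1
    unfold Nfun
    linear_combination (-a * θ) * Real.sin_sq_add_cos_sq θ
  rw [← heq]; exact h

theorem shafer_f_unique_min (a : ℝ) (ha1 : 1 / 2 < a) (ha2 : a < 2 / Real.pi) :
    ∃! x₀ : ℝ, x₀ ∈ Set.Ioi (0 : ℝ) ∧
      ∀ x ∈ Set.Ioi (0 : ℝ), x ≠ x₀ →
        ((a + Real.sqrt (1 + x₀ ^ 2)) * Real.arctan x₀) / x₀ <
          ((a + Real.sqrt (1 + x ^ 2)) * Real.arctan x) / x := by
  have hpi : (0 : ℝ) < π := Real.pi_pos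
  have hpi3 : (3 : ℝ) < π := Real.pi_gt_three
  have ha0 : 0 < a := lt_trans (by norm_num) ha1
  have haπ : a * π < 2 := (lt_div_iff₀ hpi).mp ha2
  -- 2a < π/2
  have h2a : 2 * a < π / 2 := by nlinarith
  -- θ₁ = arccos (1/(2a))
  set c : ℝ := 1 / (2 * a) with hc
  have hc0 : 0 < c := by positivity
  have hc1 : c < 1 := by rw [hc]; rw [div_lt_one (by linarith)]; linarith
  set θ₁ : ℝ := Real.arccos c with hθ₁
  have hθ₁0 : 0 < θ₁ := Real.arccos_pos.2 hc1
  have hθ₁π2 : θ₁ < π / 2 := by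
    have := Real.arccos_lt_pi_div_two.2 hc0
    exact this
  have hcosθ₁ : Real.cos θ₁ = c := Real.cos_arccos (by linarith) hc1.le
  -- p θ = θ - 2a sin θ
  set p : ℝ → ℝ := fun θ => θ - 2 * a * Real.sin θ with hp
  have hpderiv : ∀ θ : ℝ, HasDerivAt p (1 - 2 * a * Real.cos θ) θ := fun θ =>
    (hasDerivAt_id θ).sub ((Real.hasDerivAt_sin θ).const_mul (2 * a))
  have hpcont : Continuous p := by
    have : ∀ θ, DifferentiableAt ℝ p θ := fun θ => (hpderiv θ).differentiableAt
    exact Differentiable.continuous this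
  -- p strictly anti on [0, θ₁]
  have hpanti : StrictAntiOn p (Icc 0 θ₁) := by
    apply strictAntiOn_of_deriv_neg (convex_Icc _ _) hpcont.continuousOn
    intro θ hθ
    rw [interior_Icc] at hθ
    rw [(hpderiv θ).deriv]
    have hcos : c < Real.cos θ := by
      rw [← hcosθ₁]
      exact Real.strictAntiOn_cos ⟨hθ.1.le, by linarith [hθ.2, hθ₁π2, hpi]⟩
        ⟨hθ₁0.le, by linarith [hθ₁π2, hpi]⟩ hθ.2
    have : 1 < 2 * a * Real.cos θ := by
      calc 1 = 2 * a * c := by rw [hc]; field_simp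
        _ < 2 * a * Real.cos θ := by nlinarith
    linarith
  -- p strictly mono on [θ₁, π/2]
  have hpmono : StrictMonoOn p (Icc θ₁ (π / 2)) := by
    apply strictMonoOn_of_deriv_pos (convex_Icc _ _) hpcont.continuousOn
    intro θ hθ
    rw [interior_Icc] at hθ
    rw [(hpderiv θ).deriv]
    have hcos : Real.cos θ < c := by
      rw [← hcosθ₁]
      exact Real.strictAntiOn_cos ⟨hθ₁0.le, by linarith [hθ₁π2, hpi]⟩
        ⟨by linarith [hθ.1, hθ₁0], by linarith [hθ.2, hpi]⟩ hθ.1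
    have : 2 * a * Real.cos θ < 1 := by
      calc 2 * a * Real.cos θ < 2 * a * c := by nlinarith
        _ = 1 := by rw [hc]; field_simp
    linarith
  have hp0 : p 0 = 0 := by simp [hp]
  have hpθ₁ : p θ₁ < 0 := by
    have := hpanti (left_mem_Icc.2 hθ₁0.le) (right_mem_Icc.2 hθ₁0.le) hθ₁0
    rwa [hp0] at this
  have hpπ2 : 0 < p (π / 2) := by
    simp only [hp, Real.sin_pi_div_two]
    linarith
  -- zero θ₂ of p in (θ₁, π/2)
  obtain ⟨θ₂, hθ₂mem, hθ₂⟩ : ∃ θ₂ ∈ Ioo θ₁ (π / 2), p θ₂ = 0 := by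
    have := intermediate_value_Ioo (le_of_lt hθ₁π2) hpcont.continuousOn (f := p)
    have h0 : (0 : ℝ) ∈ Ioo (p θ₁) (p (π / 2)) := ⟨hpθ₁, hpπ2⟩
    obtain ⟨θ₂, hmem, heq⟩ := this h0
    exact ⟨θ₂, hmem, heq⟩
  -- sign of p
  have hpneg : ∀ θ ∈ Ioo (0 : ℝ) θ₂, p θ < 0 := by
    intro θ hθ
    rcases le_or_gt θ θ₁ with h | h
    · have := hpanti (left_mem_Icc.2 hθ₁0.le) ⟨hθ.1.le, h⟩ hθ.1
      rwa [hp0] at this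
    · have := hpmono ⟨h.le, by linarith [hθ.2, hθ₂mem.2]⟩ ⟨hθ₂mem.1.le, hθ₂mem.2.le⟩ hθ.2
      rwa [hθ₂] at this
  have hppos : ∀ θ ∈ Ioo θ₂ (π / 2), 0 < p θ := by
    intro θ hθ
    have := hpmono ⟨hθ₂mem.1.le, hθ₂mem.2.le⟩ ⟨by linarith [hθ.1, hθ₂mem.1], hθ.2.le⟩ hθ.1
    rwa [hθ₂] at this
  -- N analysis
  have hNcont : Continuous (Nfun a) := by
    have : ∀ θ, DifferentiableAt ℝ (Nfun a) θ := fun θ => (hasDerivAt_Nfun a θ).differentiableAt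
    exact Differentiable.continuous this
  have hθ₂0 : 0 < θ₂ := lt_trans hθ₁0 hθ₂mem.1
  have hNanti : StrictAntiOn (Nfun a) (Icc 0 θ₂) := by
    apply strictAntiOn_of_deriv_neg (convex_Icc _ _) hNcont.continuousOn
    intro θ hθ
    rw [interior_Icc] at hθ
    rw [(hasDerivAt_Nfun a θ).deriv]
    have hsin : 0 < Real.sin θ := Real.sin_pos_of_pos_of_lt_pi hθ.1
      (by linarith [hθ.2, hθ₂mem.2])
    have := hpneg θ hθ
    simp only [hp] at this
    nlinarith
  have hNmono : StrictMonoOn (Nfun a) (Icc θ₂ (π / 2)) := by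
    apply strictMonoOn_of_deriv_pos (convex_Icc _ _) hNcont.continuousOn
    intro θ hθ
    rw [interior_Icc] at hθ
    rw [(hasDerivAt_Nfun a θ).deriv]
    have hsin : 0 < Real.sin θ := Real.sin_pos_of_pos_of_lt_pi (by linarith [hθ.1])
      (by linarith [hθ.2])
    have := hppos θ hθ
    simp only [hp] at this
    nlinarith
  have hN0 : Nfun a 0 = 0 := by simp [Nfun]
  have hNθ₂ : Nfun a θ₂ < 0 := by
    have := hNanti (left_mem_Icc.2 hθ₂0.le) (right_mem_Icc.2 hθ₂0.le) hθ₂0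
    rwa [hN0] at this
  have hNπ2 : 0 < Nfun a (π / 2) := by
    simp only [Nfun, Real.sin_pi_div_two, Real.cos_pi_div_two]
    nlinarith
  obtain ⟨θ₀, hθ₀mem, hθ₀⟩ : ∃ θ₀ ∈ Ioo θ₂ (π / 2), Nfun a θ₀ = 0 := by
    have := intermediate_value_Ioo hθ₂mem.2.le hNcont.continuousOn (f := Nfun a)
    obtain ⟨θ₀, hmem, heq⟩ := this ⟨hNθ₂, hNπ2⟩
    exact ⟨θ₀, hmem, heq⟩
  have hθ₀0 : 0 < θ₀ := lt_trans hθ₂0 hθ₀mem.1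
  have hθ₀π2 : θ₀ < π / 2 := hθ₀mem.2
  -- sign of N
  have hNneg : ∀ θ ∈ Ioo (0 : ℝ) θ₀, Nfun a θ < 0 := by
    intro θ hθ
    rcases le_or_gt θ θ₂ with h | h
    · have := hNanti (left_mem_Icc.2 hθ₂0.le) ⟨hθ.1.le, h⟩ hθ.1
      rwa [hN0] at this
    · have := hNmono ⟨h.le, by linarith [hθ.2]⟩ ⟨hθ₀mem.1.le, hθ₀mem.2.le⟩ hθ.2
      rwa [hθ₀] at this
  have hNpos : ∀ θ ∈ Ioo θ₀ (π / 2), 0 < Nfun a θ := by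
    intro θ hθ
    have := hNmono ⟨hθ₀mem.1.le, hθ₀mem.2.le⟩ ⟨by linarith [hθ.1, hθ₀mem.1], hθ.2.le⟩ hθ.1
    rwa [hθ₀] at this
  -- G analysis
  have hsinpos : ∀ θ ∈ Ioo (0 : ℝ) (π / 2), 0 < Real.sin θ := fun θ hθ =>
    Real.sin_pos_of_pos_of_lt_pi hθ.1 (by linarith [hθ.2])
  have hGderiv : ∀ θ ∈ Ioo (0 : ℝ) (π / 2),
      HasDerivAt (Gfun a) (Nfun a θ / (Real.sin θ) ^ 2) θ := fun θ hθ =>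
    hasDerivAt_Gfun a θ (hsinpos θ hθ).ne'
  have hGcontOn : ∀ s ⊆ Ioo (0 : ℝ) (π / 2), ContinuousOn (Gfun a) s := by
    intro s hs θ hθ
    exact ((hGderiv θ (hs hθ)).differentiableAt.continuousAt).continuousWithinAt
  have hGanti : StrictAntiOn (Gfun a) (Ioc 0 θ₀) := by
    apply strictAntiOn_of_deriv_neg (convex_Ioc _ _)
      (hGcontOn _ (fun θ hθ => ⟨hθ.1, lt_of_le_of_lt hθ.2 hθ₀π2⟩))
    intro θ hθ
    rw [interior_Ioc] at hθ
    rw [(hGderiv θ ⟨hθ.1, lt_trans hθ.2 hθ₀π2⟩).deriv]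
    apply div_neg_of_neg_of_pos (hNneg θ hθ)
    have := hsinpos θ ⟨hθ.1, lt_trans hθ.2 hθ₀π2⟩
    positivity
  have hGmono : StrictMonoOn (Gfun a) (Ico θ₀ (π / 2)) := by
    apply strictMonoOn_of_deriv_pos (convex_Ico _ _)
      (hGcontOn _ (fun θ hθ => ⟨lt_of_lt_of_le hθ₀0 hθ.1, hθ.2⟩))
    intro θ hθ
    rw [interior_Ico] at hθ
    rw [(hGderiv θ ⟨lt_trans hθ₀0 hθ.1, hθ.2⟩).deriv]
    apply div_pos (hNpos θ hθ)
    have := hsinpos θ ⟨lt_trans hθ₀0 hθ.1, hθ.2⟩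
    positivity
  -- G has strict min at θ₀
  have hGmin : ∀ θ ∈ Ioo (0 : ℝ) (π / 2), θ ≠ θ₀ → Gfun a θ₀ < Gfun a θ := by
    intro θ hθ hne
    rcases lt_or_gt_of_ne hne with h | h
    · exact hGanti ⟨hθ.1, h.le⟩ (right_mem_Ioc.2 hθ₀0) h
    · exact hGmono (left_mem_Ico.2 hθ₀π2) ⟨h.le, hθ.2⟩ h
  -- translate back: f x = Gfun a (arctan x) for x > 0
  have hf : ∀ x : ℝ, 0 < x →
      ((a + Real.sqrt (1 + x ^ 2)) * Real.arctan x) / x = Gfun a (Real.arctan x) := by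
    intro x hx
    have hu : 0 < Real.sqrt (1 + x ^ 2) := Real.sqrt_pos.2 (by positivity)
    rw [Gfun, Real.cos_arctan, Real.sin_arctan]
    field_simp
  -- x₀ := tan θ₀
  have harctan_pos : ∀ x : ℝ, 0 < x → 0 < Real.arctan x := fun x hx => by
    simpa [Real.arctan_zero] using Real.arctan_strictMono hx
  set x₀ : ℝ := Real.tan θ₀ with hx₀
  have hx₀pos : 0 < x₀ := Real.tan_pos_of_pos_of_lt_pi_div_two hθ₀0 hθ₀π2
  have harctanx₀ : Real.arctan x₀ = θ₀ := Real.arctan_tan (by linarith) hθ₀π2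
  refine ⟨x₀, ⟨hx₀pos, ?_⟩, ?_⟩
  · intro x hx hne
    have hx' : 0 < x := hx
    rw [hf x hx', hf x₀ hx₀pos, harctanx₀]
    apply hGmin
    · exact ⟨harctan_pos x hx', Real.arctan_lt_pi_div_two x⟩
    · intro h
      apply hne
      have : Real.tan (Real.arctan x) = Real.tan θ₀ := by rw [h]
      rwa [Real.tan_arctan] at this
  · rintro y ⟨hy, hymin⟩
    by_contra hne
    have h1 := hymin x₀ hx₀pos (fun h => hne h.symm)
    have h2 : x₀ ∈ Set.Ioi (0:ℝ) := hx₀pos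
    -- need the first witness property for x₀; reconstruct
    have h3 : ((a + Real.sqrt (1 + x₀ ^ 2)) * Real.arctan x₀) / x₀ <
        ((a + Real.sqrt (1 + y ^ 2)) * Real.arctan y) / y := by
      rw [hf y hy, hf x₀ hx₀pos, harctanx₀]
      apply hGmin
      · exact ⟨harctan_pos y hy, Real.arctan_lt_pi_div_two y⟩
      · intro h
        apply hne
        have : Real.tan (Real.arctan y) = Real.tan θ₀ := by rw [h]
        rw [Real.tan_arctan] at this
        rw [this]
    linarith
end

section
/- For every real number a with 0 ≤ a ≤ 1/2 and every x > 0, one has arctan x > (1 + a)·x/(a + √(1 + x²)). -/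
theorem arctan_gt_of_mem_Icc (a : ℝ) (ha0 : 0 ≤ a) (ha1 : a ≤ 1 / 2) (x : ℝ) (hx : 0 < x) :
    Real.arctan x > (1 + a) * x / (a + Real.sqrt (1 + x ^ 2)) := by
  set F : ℝ → ℝ := fun t => Real.arctan t - (1 + a) * t / (a + Real.sqrt (1 + t ^ 2)) with hF
  have hspos : ∀ t : ℝ, 0 < Real.sqrt (1 + t ^ 2) := fun t =>
    Real.sqrt_pos.2 (by positivity)
  have hdenom : ∀ t : ℝ, a + Real.sqrt (1 + t ^ 2) ≠ 0 := fun t => by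
    have := hspos t; linarith
  have hsq : ∀ t : ℝ, Real.sqrt (1 + t ^ 2) ^ 2 = 1 + t ^ 2 := fun t =>
    Real.sq_sqrt (by positivity)
  have hsd : ∀ t : ℝ, HasDerivAt (fun u : ℝ => Real.sqrt (1 + u ^ 2))
      (t / Real.sqrt (1 + t ^ 2)) t := by
    intro t
    have h1 : HasDerivAt (fun u : ℝ => 1 + u ^ 2) (2 * t) t := by
      simpa using ((hasDerivAt_pow 2 t).const_add 1)
    have h2 := (Real.hasDerivAt_sqrt (by positivity : (1:ℝ) + t ^ 2 ≠ 0)).comp t h1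
    convert h2 using 1
    rfl
    rfl
    rfl
    field_simp
  have hderiv : ∀ t : ℝ, HasDerivAt F
      (1 / (1 + t ^ 2) - ((1 + a) * (a + Real.sqrt (1 + t ^ 2)) -
        (1 + a) * t * (t / Real.sqrt (1 + t ^ 2))) / (a + Real.sqrt (1 + t ^ 2)) ^ 2) t := by
    intro t
    have h1 := Real.hasDerivAt_arctan t
    have h2 : HasDerivAt (fun u : ℝ => (1 + a) * u) (1 + a) t := by
      simpa using (hasDerivAt_id t).const_mul (1 + a)
    have h3 : HasDerivAt (fun u : ℝ => a + Real.sqrt (1 + u ^ 2))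
        (t / Real.sqrt (1 + t ^ 2)) t := ((hsd t).const_add a)
    exact h1.sub (h2.div h3 (hdenom t))
  have hderivpos : ∀ t : ℝ, 0 < t →
      0 < 1 / (1 + t ^ 2) - ((1 + a) * (a + Real.sqrt (1 + t ^ 2)) -
        (1 + a) * t * (t / Real.sqrt (1 + t ^ 2))) / (a + Real.sqrt (1 + t ^ 2)) ^ 2 := by
    intro t ht
    set s := Real.sqrt (1 + t ^ 2) with hs
    have hs2 : s ^ 2 = 1 + t ^ 2 := hsq t
    have hs1 : 1 < s := by
      nlinarith [hspos t, hsq t, sq_nonneg (s - 1)]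
    have hspos' : 0 < s := hspos t
    have hd : 0 < a + s := by linarith
    have key : (1 + a) * (a * s + 1) * s < (a + s) ^ 2 := by
      have h1 : 0 < s - 1 := by linarith
      have hc : 0 < 1 - a - a ^ 2 := by nlinarith
      have h3 : 0 < (1 - a - a ^ 2) * (s + 1) + a - 1 := by
        nlinarith [mul_pos hc h1, mul_nonneg (by linarith : (0:ℝ) ≤ 1 - 2 * a) (by linarith : (0:ℝ) ≤ 1 + a)]
      nlinarith [mul_pos h1 h3]
    rw [sub_pos, div_lt_div_iff₀ (by positivity) (by positivity)]
    have hexp : (1 + a) * (a + s) - (1 + a) * t * (t / s) =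
        (1 + a) * (a * s + 1) / s := by
      field_simp
      nlinarith [hs2]
    rw [hexp]
    rw [div_mul_eq_mul_div, div_lt_iff₀ hspos']
    nlinarith [key, sq_nonneg t, hd]
  have hmono : StrictMonoOn F (Set.Ici (0 : ℝ)) := by
    apply strictMonoOn_of_deriv_pos (convex_Ici 0)
    · exact Continuous.continuousOn (by
        have : Continuous F := by
          apply Continuous.sub Real.continuous_arctan
          exact (continuous_const.mul continuous_id).div
            (continuous_const.add ((continuous_const.add (continuous_pow 2)).sqrt))
            (fun t => hdenom t)
        exact this)
    · intro t ht
      rw [interior_Ici] at ht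
      rw [(hderiv t).deriv]
      exact hderivpos t ht
  have h0 : F 0 = 0 := by simp [hF]
  have := hmono (Set.self_mem_Ici) (Set.mem_Ici.2 hx.le) hx
  rw [h0] at this
  simp only [hF] at this
  linarith
end

section
/- For every real number a with 0 ≤ a ≤ 1/2 and every x > 0, one has arctan x < (π/2)·x/(a + √(1 + x²)). -/
open Real Set

lemma aux_core (θ : ℝ) (h0 : 0 < θ) (h1 : θ < π / 2) :
    θ * (Real.cos θ + 2) < π * Real.sin θ := by
  set f : ℝ → ℝ := fun t => π * Real.sin t - t * (Real.cos t + 2) with hf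
  have hd : ∀ t : ℝ, HasDerivAt f ((π - 1) * Real.cos t + t * Real.sin t - 2) t := by
    intro t
    have h1' : HasDerivAt (fun t => π * Real.sin t) (π * Real.cos t) t :=
      (Real.hasDerivAt_sin t).const_mul π
    have h2' : HasDerivAt (fun t : ℝ => t * (Real.cos t + 2))
        (1 * (Real.cos t + 2) + t * (-Real.sin t)) t :=
      (hasDerivAt_id t).mul ((Real.hasDerivAt_cos t).add_const 2)
    have := h1'.sub h2'
    exact this.congr_deriv (by ring)
  have hderiv : deriv f = fun t => (π - 1) * Real.cos t + t * Real.sin t - 2 :=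
    funext fun t => (hd t).deriv
  have hd2 : ∀ t : ℝ, HasDerivAt (fun t => (π - 1) * Real.cos t + t * Real.sin t - 2)
      ((2 - π) * Real.sin t + t * Real.cos t) t := by
    intro t
    have h1' : HasDerivAt (fun t => (π - 1) * Real.cos t) ((π - 1) * (-Real.sin t)) t :=
      (Real.hasDerivAt_cos t).const_mul (π - 1)
    have h2' : HasDerivAt (fun t : ℝ => t * Real.sin t)
        (1 * Real.sin t + t * Real.cos t) t :=
      (hasDerivAt_id t).mul (Real.hasDerivAt_sin t)
    have := (h1'.add h2').sub_const 2
    exact this.congr_deriv (by ring)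
  have hconc : StrictConcaveOn ℝ (Icc 0 (π / 2)) f := by
    apply strictConcaveOn_of_deriv2_neg (convex_Icc _ _)
    · apply Continuous.continuousOn
      fun_prop
    · intro t ht
      rw [interior_Icc] at ht
      have hderiv2 : deriv^[2] f t = (2 - π) * Real.sin t + t * Real.cos t := by
        simp only [Function.iterate_succ, Function.iterate_zero, Function.comp_apply, id_eq,
          hderiv]
        exact (hd2 t).deriv
      rw [hderiv2]
      have ht0 : 0 < t := ht.1
      have ht1 : t < π / 2 := ht.2
      have hcos : 0 < Real.cos t := Real.cos_pos_of_mem_Ioo ⟨by linarith [Real.pi_pos], ht1⟩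
      have hsin : 0 < Real.sin t := Real.sin_pos_of_pos_of_lt_pi ht0 (by linarith [Real.pi_pos])
      have htan : t < Real.tan t := Real.lt_tan ht0 ht1
      rw [Real.tan_eq_sin_div_cos] at htan
      have : t * Real.cos t < Real.sin t := by
        rw [lt_div_iff₀ hcos] at htan
        linarith
      have hpi : (3 : ℝ) < π := Real.pi_gt_three
      nlinarith
  have hmem0 : (0 : ℝ) ∈ Icc (0 : ℝ) (π / 2) := ⟨le_refl _, by positivity⟩
  have hmemp : π / 2 ∈ Icc (0 : ℝ) (π / 2) := ⟨by positivity, le_refl _⟩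
  have hne : (0 : ℝ) ≠ π / 2 := by positivity
  have hpi : (0 : ℝ) < π / 2 := by positivity
  have ht2 : 0 < θ / (π / 2) := by positivity
  have ht1' : θ / (π / 2) < 1 := (div_lt_one hpi).mpr h1
  have hsum : (1 - θ / (π / 2)) + θ / (π / 2) = 1 := by ring
  have key := hconc.2 hmem0 hmemp hne (by linarith : (0:ℝ) < 1 - θ / (π / 2)) ht2 hsum
  have hcomb : (1 - θ / (π / 2)) • (0 : ℝ) + (θ / (π / 2)) • (π / 2) = θ := by
    simp only [smul_eq_mul]
    field_simp
    ring
  rw [hcomb] at key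
  have hf0 : f 0 = 0 := by simp [hf]
  have hfp : f (π / 2) = 0 := by simp [hf]
  rw [hf0, hfp] at key
  simp only [smul_eq_mul, mul_zero, add_zero] at key
  have : 0 < f θ := key
  simp only [hf] at this
  linarith

theorem arctan_lt_of_mem_Icc (a : ℝ) (ha0 : 0 ≤ a) (ha1 : a ≤ 1 / 2) (x : ℝ) (hx : 0 < x) :
    Real.arctan x < (Real.pi / 2) * x / (a + Real.sqrt (1 + x ^ 2)) := by
  set θ := Real.arctan x with hθ
  have h0 : 0 < θ := by
    rw [hθ, ← Real.arctan_zero]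
    exact Real.arctan_strictMono hx
  have h1 : θ < π / 2 := Real.arctan_lt_pi_div_two x
  have hcore := aux_core θ h0 h1
  set s := Real.sqrt (1 + x ^ 2) with hs
  have hs1 : 1 ≤ s := by
    have := Real.sqrt_le_sqrt (show (1:ℝ) ≤ 1 + x ^ 2 by nlinarith)
    simpa [hs] using this
  have hs0 : 0 < s := by linarith
  have hcos : Real.cos θ = 1 / s := by rw [hθ, hs]; exact Real.cos_arctan x
  have hsin : Real.sin θ = x / s := by rw [hθ, hs]; exact Real.sin_arctan x
  rw [hcos, hsin] at hcore
  -- hcore : θ * (1/s + 2) < π * (x/s)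
  have hkey : θ * (1 + 2 * s) < π * x := by
    have := mul_lt_mul_of_pos_right hcore hs0
    field_simp at this
    linarith
  have hden : 0 < a + s := by linarith
  rw [lt_div_iff₀ hden]
  have hθpos : 0 < θ := h0
  have : θ * (a + s) ≤ θ * (1 / 2 + s) := by
    apply mul_le_mul_of_nonneg_left _ hθpos.le
    linarith
  nlinarith
end

section
/- For every real number a with 1/2 < a < 2/π and every x > 0, one has arctan x > 4a(1 − a²)·x/(a + √(1 + x²)). -/
set_option maxHeartbeats 1000000 in
theorem arctan_gt_of_mem_Ioo (a : ℝ) (ha1 : 1 / 2 < a) (ha2 : a < 2 / Real.pi)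
    (x : ℝ) (hx : 0 < x) :
    Real.arctan x > 4 * a * (1 - a ^ 2) * x / (a + Real.sqrt (1 + x ^ 2)) := by
  have hpi3 : (3:ℝ) < Real.pi := Real.pi_gt_three
  have ha0 : (0:ℝ) < a := by linarith
  have ha23 : a < 2/3 := by
    have : 2 / Real.pi < 2/3 := by
      rw [div_lt_div_iff₀ (by linarith) (by norm_num)]
      linarith
    linarith
  have h2a : 2*a^2 < 1 := by nlinarith
  set c : ℝ := 4*a*(1-a^2) with hc
  set s0 : ℝ := a/(1-2*a^2) with hs0def
  have hs0pos : 0 < s0 := div_pos ha0 (by linarith)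
  have hs0a : (1-2*a^2) * s0 = a := by
    rw [hs0def, mul_comm, div_mul_cancel₀ _ (by linarith : (1:ℝ)-2*a^2 ≠ 0)]
  have hs01 : 1 < s0 := by
    rw [hs0def, lt_div_iff₀ (by linarith)]
    nlinarith
  set x0 : ℝ := Real.sqrt (s0^2 - 1) with hx0def
  have hx0 : 0 < x0 := Real.sqrt_pos.2 (by nlinarith)
  have hx0sq : x0^2 = s0^2 - 1 := Real.sq_sqrt (by nlinarith)
  set h : ℝ → ℝ := fun t => Real.arctan t - c*t/(a + Real.sqrt (1+t^2)) with hhdef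
  set f' : ℝ → ℝ := fun t =>
    ((2*a^2-1)*Real.sqrt (1+t^2)+a)^2 / ((1+t^2) * (a+Real.sqrt (1+t^2))^2) with hf'def
  -- generic facts about s = sqrt (1+t^2)
  have hsfacts : ∀ t : ℝ, 1 ≤ Real.sqrt (1+t^2) ∧ Real.sqrt (1+t^2)^2 = 1+t^2 := by
    intro t
    have ht2 : (0:ℝ) ≤ 1 + t^2 := by positivity
    refine ⟨?_, Real.sq_sqrt ht2⟩
    nlinarith [Real.sqrt_nonneg (1+t^2), Real.sq_sqrt ht2, sq_nonneg t]
  have hderiv : ∀ t : ℝ, HasDerivAt h (f' t) t := by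
    intro t
    have ht2 : (0:ℝ) < 1 + t^2 := by positivity
    obtain ⟨hs1, hs2⟩ := hsfacts t
    set s := Real.sqrt (1+t^2) with hsdef
    have hsne : s ≠ 0 := by linarith
    have hasne : a + s ≠ 0 := by positivity
    have hsqrt : HasDerivAt (fun u : ℝ => Real.sqrt (1+u^2)) (t/s) t := by
      have h1 : HasDerivAt (fun u:ℝ => 1+u^2) (2*t) t := by
        simpa using ((hasDerivAt_pow 2 t).const_add 1)
      have h2 := (Real.hasDerivAt_sqrt (ne_of_gt ht2)).comp t h1
      refine h2.congr_deriv (Eq.symm ?_)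
      rw [← hsdef]
      field_simp
    have hg := ((hasDerivAt_id t).const_mul c).div (hsqrt.const_add a) hasne
    simp only [id_eq, mul_one] at hg
    have harc := (Real.hasDerivAt_arctan t).sub hg
    refine harc.congr_deriv (Eq.symm ?_)
    rw [hf'def]
    simp only [← hsdef]
    have ht2' : t^2 = s^2 - 1 := by linarith
    have key : c * t * (t / s) = c * (s^2-1) / s := by
      rw [← ht2']; field_simp [hsne]
    rw [key, ← hs2, hc]
    field_simp
    ring
  have hcont : ∀ t : ℝ, ContinuousAt h t := fun t => (hderiv t).differentiableAt.continuousAt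
  -- strict monotonicity on [0, x0]
  have hmono1 : StrictMonoOn h (Set.Icc 0 x0) := by
    apply strictMonoOn_of_hasDerivWithinAt_pos (convex_Icc _ _)
      (fun t _ => (hcont t).continuousWithinAt)
      (fun t _ => (hderiv t).hasDerivWithinAt)
    intro t ht
    rw [interior_Icc] at ht
    obtain ⟨hs1, hs2⟩ := hsfacts t
    have hss0 : Real.sqrt (1+t^2) < s0 := by
      have h1 : t^2 < x0^2 := by nlinarith [ht.1, ht.2]
      have : 1 + t^2 < s0^2 := by linarith [hx0sq]
      calc Real.sqrt (1+t^2) < Real.sqrt (s0^2) := by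
            apply (Real.sqrt_lt_sqrt (by positivity) this)
        _ = s0 := Real.sqrt_sq hs0pos.le
    have hbase : 0 < (2*a^2-1)*Real.sqrt (1+t^2)+a := by nlinarith
    rw [hf'def]
    have hsp : (0:ℝ) < Real.sqrt (1+t^2) := by linarith
    apply div_pos (by positivity) (by positivity)
  -- strict monotonicity on [x0, ∞)
  have hmono2 : StrictMonoOn h (Set.Ici x0) := by
    apply strictMonoOn_of_hasDerivWithinAt_pos (convex_Ici _)
      (fun t _ => (hcont t).continuousWithinAt)
      (fun t _ => (hderiv t).hasDerivWithinAt)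
    intro t ht
    rw [interior_Ici] at ht
    obtain ⟨hs1, hs2⟩ := hsfacts t
    have hss0 : s0 < Real.sqrt (1+t^2) := by
      have htx : x0 < t := ht
      have h1 : x0^2 < t^2 := by nlinarith [mul_pos (sub_pos.2 htx) (by linarith : (0:ℝ) < t + x0)]
      have : s0^2 < 1 + t^2 := by linarith [hx0sq]
      calc s0 = Real.sqrt (s0^2) := (Real.sqrt_sq hs0pos.le).symm
        _ < Real.sqrt (1+t^2) := Real.sqrt_lt_sqrt (by positivity) this
    have hbase : (2*a^2-1)*Real.sqrt (1+t^2)+a < 0 := by nlinarith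
    rw [hf'def]
    have hsp : (0:ℝ) < Real.sqrt (1+t^2) := by linarith
    exact div_pos (pow_two_pos_of_ne_zero (ne_of_lt hbase)) (by positivity)
  have hmono : StrictMonoOn h (Set.Ici 0) := by
    rw [← Set.Icc_union_Ici_eq_Ici hx0.le]
    exact hmono1.union hmono2 (isGreatest_Icc hx0.le) isLeast_Ici
  have h0 : h 0 = 0 := by
    rw [hhdef]; simp
  have hgt : h 0 < h x := hmono Set.self_mem_Ici (Set.mem_Ici.2 hx.le) hx
  rw [h0] at hgt
  simp only [hhdef] at hgt
  linarith [hgt]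
end

section
/- For every real number a with 1/2 < a < 2/π and every x > 0, one has arctan x < max{π/2, 1 + a}·x/(a + √(1 + x²)). -/
open Real

lemma arctan_aux_sqrt_deriv (y : ℝ) : HasDerivAt (fun x : ℝ => Real.sqrt (1 + x^2))
    (y / Real.sqrt (1 + y^2)) y := by
  have h1 : (0:ℝ) < 1 + y^2 := by positivity
  have h := (Real.hasDerivAt_sqrt (ne_of_gt h1)).comp y
    ((hasDerivAt_const y (1:ℝ)).add (hasDerivAt_pow 2 y))
  refine h.congr_deriv ?_
  have hs : Real.sqrt (1 + y^2) ≠ 0 := by positivity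
  field_simp
  ring

lemma arctan_aux_taylor {x : ℝ} (hx : 0 < x) :
    Real.arctan x < x - x^3/3 + x^5/5 - x^7/7 + x^9/9 - x^11/11 + x^13/13 := by
  have key : StrictMonoOn (fun x : ℝ => x - x^3/3 + x^5/5 - x^7/7 + x^9/9 - x^11/11 + x^13/13
      - Real.arctan x) (Set.Ici 0) := by
    apply strictMonoOn_of_deriv_pos (convex_Ici 0)
    · exact ((continuous_id.sub (continuous_pow 3|>.div_const 3)|>.add
        (continuous_pow 5|>.div_const 5)|>.sub (continuous_pow 7|>.div_const 7)|>.add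
        (continuous_pow 9|>.div_const 9)|>.sub (continuous_pow 11|>.div_const 11)|>.add
        (continuous_pow 13|>.div_const 13)).sub Real.continuous_arctan).continuousOn
    · intro y hy
      rw [interior_Ici] at hy
      have h1 : HasDerivAt (fun x : ℝ => x - x^3/3 + x^5/5 - x^7/7 + x^9/9 - x^11/11 + x^13/13
          - Real.arctan x) ((1 - y^2 + y^4 - y^6 + y^8 - y^10 + y^12) - 1/(1+y^2)) y := by
        have := (Real.hasDerivAt_arctan y)
        have hp : HasDerivAt (fun x : ℝ => x - x^3/3 + x^5/5 - x^7/7 + x^9/9 - x^11/11 + x^13/13)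
            (1 - y^2 + y^4 - y^6 + y^8 - y^10 + y^12) y := by
          have h := ((((((hasDerivAt_id y).sub ((hasDerivAt_pow 3 y).div_const 3)).add
            ((hasDerivAt_pow 5 y).div_const 5)).sub ((hasDerivAt_pow 7 y).div_const 7)).add
            ((hasDerivAt_pow 9 y).div_const 9)).sub ((hasDerivAt_pow 11 y).div_const 11)).add
            ((hasDerivAt_pow 13 y).div_const 13)
          refine h.congr_deriv ?_
          ring
        exact hp.sub this
      rw [h1.deriv]
      have h2 : (0:ℝ) < 1 + y^2 := by positivity
      rw [sub_pos, div_lt_iff₀ h2]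
      nlinarith [pow_pos (show (0:ℝ) < y from hy) 14]
  have h := key (Set.mem_Ici.2 le_rfl) (Set.mem_Ici.2 hx.le) hx
  simpa using h

lemma arctan_aux_shafer {x : ℝ} (hx : 0 < x) :
    3*x/(1+2*Real.sqrt (1+x^2)) < Real.arctan x := by
  have key : StrictMonoOn (fun x : ℝ => Real.arctan x - 3*x/(1+2*Real.sqrt (1+x^2)))
      (Set.Ici 0) := by
    apply strictMonoOn_of_deriv_pos (convex_Ici 0)
    · apply Real.continuous_arctan.continuousOn.sub
      apply ContinuousOn.div
      · fun_prop
      · fun_prop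
      · intro y _
        have : (0:ℝ) < Real.sqrt (1+y^2) := Real.sqrt_pos.2 (by positivity)
        positivity
    · intro y hy
      rw [interior_Ici] at hy
      have hy0 : 0 < y := hy
      set s := Real.sqrt (1 + y^2) with hs
      have hs0 : 0 < s := Real.sqrt_pos.2 (by positivity)
      have hssq : s^2 = 1 + y^2 := Real.sq_sqrt (by positivity)
      have h1s : 1 < s := by nlinarith
      have hden : (1 + 2*s) ≠ 0 := by positivity
      have hq' : HasDerivAt (fun x : ℝ => 3*x) 3 y := by
        simpa using (hasDerivAt_id y).const_mul (3:ℝ)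
      have hq := hq'.div (((arctan_aux_sqrt_deriv y).const_mul 2).const_add 1) hden
      have h1 : HasDerivAt (fun x => Real.arctan x - 3*x/(1+2*Real.sqrt (1+x^2))) _ y :=
        (Real.hasDerivAt_arctan y).sub hq
      rw [h1.deriv]
      have hy2 : y^2 = s^2 - 1 := by linarith
      rw [sub_pos, div_lt_div_iff₀ (by positivity) (by positivity)]
      have hrw : 3 * y * (2 * (y / s)) = 6*(s^2-1)/s := by
        field_simp
        linear_combination (-6:ℝ) * hssq
      rw [hrw]
      have hsne : s ≠ 0 := ne_of_gt hs0
      rw [show (3 * (1 + 2 * s) - 6 * (s ^ 2 - 1) / s) = (3*s*(1+2*s) - 6*(s^2-1))/s by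
        field_simp]
      rw [div_mul_eq_mul_div, div_lt_iff₀ hs0]
      have hp : (0:ℝ) < (s-1)^2 := pow_pos (by linarith) 2
      nlinarith [hssq, mul_pos hs0 hp, hp, hs0]
  have h := key (Set.mem_Ici.2 le_rfl) (Set.mem_Ici.2 hx.le) hx
  simp only [Real.arctan_zero] at h
  norm_num at h
  linarith [h]

set_option maxHeartbeats 1000000 in
lemma arctan_aux_polyA (u : ℝ) (hu0 : 0 ≤ u) (hu : u ≤ 16/25) :
    (1 - u/3 + u^2/5 - u^3/7 + u^4/9 - u^5/11 + u^6/13) * (1/2 - u/8 + u^2/16)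
      ≤ 1.570796 * (1/3 - u/5 + u^2/7 - u^3/9 + u^4/11 - u^5/13) := by
  nlinarith [mul_nonneg hu0 hu0, mul_nonneg (mul_nonneg hu0 hu0) hu0,
    mul_nonneg (by linarith : (0:ℝ) ≤ 16/25 - u) hu0,
    mul_nonneg (mul_nonneg (by linarith : (0:ℝ) ≤ 16/25 - u) hu0) hu0,
    mul_nonneg (mul_nonneg (mul_nonneg (by linarith : (0:ℝ) ≤ 16/25 - u) hu0) hu0) hu0,
    sq_nonneg (u - 16/25), sq_nonneg u,
    mul_nonneg (mul_nonneg (mul_nonneg (mul_nonneg (by linarith : (0:ℝ) ≤ 16/25 - u) hu0) hu0) hu0) hu0,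
    mul_nonneg (mul_nonneg (mul_nonneg (mul_nonneg (mul_nonneg (by linarith : (0:ℝ) ≤ 16/25 - u) hu0) hu0) hu0) hu0) hu0]

set_option maxHeartbeats 1000000 in
lemma arctan_aux_regionB (x s p : ℝ) (hx : 4/5 ≤ x) (hs : s^2 = 1 + x^2) (hs1 : 1 < s)
    (hp1 : 3.141592 < p) (hp2 : p < 3.141593) :
    (p/2) * ((p/2 - 1) + s - x) * (x + 2*s) < 3 * ((p/2 - 1) + s) := by
  have hq1 : 1.570796 < p/2 := by norm_num at hp1 ⊢; linarith
  have hq2 : p/2 < 1.5707965 := by norm_num at hp2 ⊢; linarith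
  set q := p/2 with hq
  set t := s - x with htdef
  clear_value q t
  have hsx : 0 < s + x := by linarith
  have ht1 : t * (s + x) = 1 := by rw [htdef]; nlinarith [hs]
  have ht0 : 0 < t := by
    rcases lt_trichotomy t 0 with h | h | h
    · nlinarith
    · rw [h] at ht1; norm_num at ht1
    · exact h
  have hsl : 1.2806 ≤ s := by nlinarith [hs, hx, hs1]
  have htu : t ≤ 0.4807 := by nlinarith [ht1, hsl, hx, hsx]
  have e1 : -q*t^3 ≥ -1.5707965*t^3 := by
    nlinarith [mul_pos (by linarith : (0:ℝ) < 1.5707965 - q) (pow_pos ht0 3)]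
  have hqsq : q^2 ≤ 1.5707965^2 := by
    nlinarith [mul_pos (by linarith : (0:ℝ) < 1.5707965 - q) (by linarith : (0:ℝ) < 1.5707965 + q)]
  have e2 : (3+q-q^2)*t^2 ≥ 2.1033943*t^2 := by
    have h2 : (3+q-q^2) ≥ 2.1033943 := by norm_num at hqsq ⊢; linarith
    nlinarith [sq_nonneg t, h2]
  have e3 : 3*(1+q-q^2) ≥ 0.3101829 := by norm_num at hqsq ⊢; linarith
  have e4 : 3*(q-2)*t ≥ -1.287612*t := by
    nlinarith [mul_pos (by linarith : (0:ℝ) < q - 1.570796) ht0]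
  have hcub : (0:ℝ) < -1.5707965*t^3 + 2.1033943*t^2 - 1.287612*t + 0.3101829 := by
    nlinarith [mul_nonneg (mul_nonneg (by linarith : (0:ℝ) ≤ 0.4807 - t) ht0.le) ht0.le,
      mul_nonneg (mul_nonneg (by linarith : (0:ℝ) ≤ 0.4807 - t) (by linarith : (0:ℝ) ≤ 0.4807 - t)) ht0.le,
      mul_nonneg (by linarith : (0:ℝ) ≤ 0.4807 - t) ht0.le]
  have hH : 0 < -q*t^3 + (3+q-q^2)*t^2 + 3*(q-2)*t + 3*(1+q-q^2) := by linarith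
  have hid : 2*t*(3 * ((q - 1) + s) - q * ((q - 1) + s - x) * (x + 2*s))
      = -q*t^3 + (3+q-q^2)*t^2 + 3*(q-2)*t + 3*(1+q-q^2) := by
    rw [htdef]
    linear_combination (3 + 3*q - 3*q^2 - 3*q*(s-x)) * hs
  by_contra hcon
  push_neg at hcon
  have hnp : 2*t*(3 * ((q - 1) + s) - q * ((q - 1) + s - x) * (x + 2*s)) ≤ 0 :=
    mul_nonpos_of_nonneg_of_nonpos (by linarith) (by linarith)
  rw [hid] at hnp
  linarith

set_option maxHeartbeats 1000000 in
lemma arctan_aux_key {x : ℝ} (hx : 0 < x) :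
    Real.arctan x < (Real.pi/2) * x / ((Real.pi/2 - 1) + Real.sqrt (1 + x^2)) := by
  have hp1 : 3.141592 < Real.pi := Real.pi_gt_d6
  have hp2 : Real.pi < 3.141593 := Real.pi_lt_d6
  set s := Real.sqrt (1 + x^2) with hsdef
  have hs0 : 0 < s := Real.sqrt_pos.2 (by positivity)
  have hssq : s^2 = 1 + x^2 := Real.sq_sqrt (by positivity)
  have hs1 : 1 < s := by nlinarith
  have hcpos : (0:ℝ) < Real.pi/2 - 1 := by norm_num at hp1 ⊢; linarith
  have hden : (0:ℝ) < (Real.pi/2 - 1) + s := by linarith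
  rw [lt_div_iff₀ hden]
  rcases le_or_gt x (4/5) with hcase | hcase
  · -- small x
    have hA := arctan_aux_taylor hx
    have hQ : s ≤ 1 + x^2/2 - x^4/8 + x^6/16 := by
      have hQ0 : (0:ℝ) ≤ 1 + x^2/2 - x^4/8 + x^6/16 := by nlinarith [sq_nonneg x, sq_nonneg (x^2-2), pow_nonneg (sq_nonneg x) 2, pow_nonneg (sq_nonneg x) 3]
      rw [hsdef, show (1 + x^2/2 - x^4/8 + x^6/16 : ℝ) = Real.sqrt ((1 + x^2/2 - x^4/8 + x^6/16)^2) from (Real.sqrt_sq hQ0).symm]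
      apply Real.sqrt_le_sqrt
      nlinarith [pow_nonneg (sq_nonneg x) 2, sq_nonneg (x^2 - 2), mul_nonneg (pow_nonneg (sq_nonneg x) 2) (sq_nonneg (x^2-2))]
    have harc0 : 0 < Real.arctan x := Real.arctan_zero ▸ Real.arctan_strictMono hx
    have hP0 : 0 < x - x^3/3 + x^5/5 - x^7/7 + x^9/9 - x^11/11 + x^13/13 := lt_trans harc0 hA
    have step1 : Real.arctan x * ((Real.pi/2 - 1) + s)
        < (x - x^3/3 + x^5/5 - x^7/7 + x^9/9 - x^11/11 + x^13/13)
          * ((Real.pi/2 - 1) + (1 + x^2/2 - x^4/8 + x^6/16)) :=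
      mul_lt_mul hA (by linarith) hden hP0.le
    have step2 : (x - x^3/3 + x^5/5 - x^7/7 + x^9/9 - x^11/11 + x^13/13)
          * ((Real.pi/2 - 1) + (1 + x^2/2 - x^4/8 + x^6/16)) ≤ (Real.pi/2) * x := by
      have hu := arctan_aux_polyA (x^2) (by positivity) (by nlinarith)
      have h2 := mul_le_mul_of_nonneg_left hu (by positivity : (0:ℝ) ≤ x^3)
      have hxP : 0 ≤ x - (x - x^3/3 + x^5/5 - x^7/7 + x^9/9 - x^11/11 + x^13/13) := by
        nlinarith [mul_nonneg (pow_nonneg hx.le 3) (by nlinarith : (0:ℝ) ≤ 1/3 - x^2/5),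
          mul_nonneg (pow_nonneg hx.le 7) (by nlinarith : (0:ℝ) ≤ 1/7 - x^2/9),
          mul_nonneg (pow_nonneg hx.le 11) (by nlinarith : (0:ℝ) ≤ 1/11 - x^2/13)]
      have hq1 : (1.570796:ℝ) ≤ Real.pi/2 := by norm_num at hp1 ⊢; linarith
      nlinarith [h2, mul_nonneg (by linarith : (0:ℝ) ≤ Real.pi/2 - 1.570796) hxP]
    linarith
  · -- large x
    have hxinv : 0 < 1/x := by positivity
    have hsh := arctan_aux_shafer hxinv
    have hsqinv : Real.sqrt (1 + (1/x)^2) = s/x := by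
      rw [hsdef, show (1 + (1/x)^2 : ℝ) = (1+x^2)/x^2 by field_simp; ring,
        Real.sqrt_div (by positivity : (0:ℝ) ≤ 1+x^2), Real.sqrt_sq hx.le]
    have hx2s : 0 < x + 2*s := by linarith
    have hineq : 3/(x+2*s) < Real.arctan (1/x) := by
      rw [hsqinv] at hsh
      have hrw2 : 3*(1/x)/(1+2*(s/x)) = 3/(x+2*s) := by
        rw [show (1+2*(s/x) : ℝ) = (x+2*s)/x by field_simp]
        field_simp
      rwa [hrw2] at hsh
    have harct : Real.arctan x = Real.pi/2 - Real.arctan (1/x) := by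
      rw [one_div, Real.arctan_inv_of_pos hx]
      ring
    have hAB : Real.arctan x < Real.pi/2 - 3/(x+2*s) := by
      rw [harct]; linarith
    have hB := arctan_aux_regionB x s Real.pi hcase.le hssq hs1 hp1 hp2
    have h4 : (Real.pi/2)*((Real.pi/2-1)+s-x) < 3*((Real.pi/2-1)+s)/(x+2*s) := by
      rw [lt_div_iff₀ hx2s]
      nlinarith [hB]
    have h3 : (Real.pi/2 - 3/(x+2*s)) * ((Real.pi/2-1) + s) < (Real.pi/2)*x := by
      have h5 : (3/(x+2*s))*((Real.pi/2-1)+s) = 3*((Real.pi/2-1)+s)/(x+2*s) := by ring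
      nlinarith [h4, h5]
    calc Real.arctan x * ((Real.pi/2 - 1) + s)
        < (Real.pi/2 - 3/(x+2*s)) * ((Real.pi/2-1) + s) := mul_lt_mul_of_pos_right hAB hden
      _ < (Real.pi/2)*x := h3

theorem arctan_lt_max_of_mem_Ioo (a : ℝ) (ha1 : 1 / 2 < a) (ha2 : a < 2 / Real.pi)
    (x : ℝ) (hx : 0 < x) :
    Real.arctan x < max (Real.pi / 2) (1 + a) * x / (a + Real.sqrt (1 + x ^ 2)) := by
  have hp1 : 3.141592 < Real.pi := Real.pi_gt_d6
  set s := Real.sqrt (1 + x^2) with hsdef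
  have hs0 : 0 < s := Real.sqrt_pos.2 (by positivity)
  have hssq : s^2 = 1 + x^2 := Real.sq_sqrt (by positivity)
  have hs1 : 1 < s := by nlinarith
  have hkey := arctan_aux_key hx
  have hdenc : (0:ℝ) < (Real.pi/2 - 1) + s := by norm_num at hp1 ⊢; linarith
  have hdena : (0:ℝ) < a + s := by linarith
  refine lt_of_lt_of_le hkey ?_
  rw [div_le_div_iff₀ hdenc hdena]
  have hxm : 0 ≤ x := hx.le
  rcases le_total a (Real.pi/2 - 1) with hc | hc
  · -- a ≤ c : use max ≥ π/2
    have hmax : Real.pi/2 ≤ max (Real.pi / 2) (1 + a) := le_max_left _ _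
    have h1 : Real.pi/2 * x * (a + s) ≤ Real.pi/2 * x * ((Real.pi/2 - 1) + s) := by
      apply mul_le_mul_of_nonneg_left (by linarith) (by positivity)
    have h2 : Real.pi/2 * x * ((Real.pi/2 - 1) + s) ≤ max (Real.pi / 2) (1 + a) * x * ((Real.pi/2 - 1) + s) := by
      apply mul_le_mul_of_nonneg_right (mul_le_mul_of_nonneg_right hmax hxm) (by linarith)
    linarith
  · -- c ≤ a : use max ≥ 1 + a
    have hmax : 1 + a ≤ max (Real.pi / 2) (1 + a) := le_max_right _ _
    have h1 : Real.pi/2 * x * (a + s) ≤ (1 + a) * x * ((Real.pi/2 - 1) + s) := by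
      have hfac : Real.pi/2 * (a + s) ≤ (1 + a) * ((Real.pi/2 - 1) + s) := by
        nlinarith [mul_nonneg (by linarith : (0:ℝ) ≤ a - (Real.pi/2 - 1)) (by linarith : (0:ℝ) ≤ s - 1)]
      calc Real.pi/2 * x * (a + s) = x * (Real.pi/2 * (a + s)) := by ring
        _ ≤ x * ((1 + a) * ((Real.pi/2 - 1) + s)) := mul_le_mul_of_nonneg_left hfac hxm
        _ = (1 + a) * x * ((Real.pi/2 - 1) + s) := by ring
    have h2 : (1 + a) * x * ((Real.pi/2 - 1) + s) ≤ max (Real.pi / 2) (1 + a) * x * ((Real.pi/2 - 1) + s) := by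
      apply mul_le_mul_of_nonneg_right (mul_le_mul_of_nonneg_right hmax hxm) (by linarith)
    linarith
end

section
/- For every real number a with a ≥ 2/π and every x > 0, one has (π/2)·x/(a + √(1 + x²)) < arctan x < (1 + a)·x/(a + √(1 + x²)). -/
open Real Filter Set Topology

noncomputable def sfun (x : ℝ) : ℝ := Real.sqrt (1 + x ^ 2)

lemma sfun_pos (x : ℝ) : 0 < sfun x := Real.sqrt_pos.2 (by positivity)

lemma sfun_sq (x : ℝ) : sfun x ^ 2 = 1 + x ^ 2 := Real.sq_sqrt (by positivity)

lemma one_lt_sfun {x : ℝ} (hx : 0 < x) : 1 < sfun x := by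
  nlinarith [sfun_sq x, sfun_pos x]

lemma sfun_hasDeriv (x : ℝ) : HasDerivAt sfun (x / sfun x) x := by
  have h1 : HasDerivAt (fun y : ℝ => 1 + y ^ 2) (2 * x) x := by
    simpa using (hasDerivAt_pow 2 x).const_add 1
  have h2 := (Real.hasDerivAt_sqrt (by positivity : (1:ℝ) + x ^ 2 ≠ 0)).comp x h1
  have hne : sfun x ≠ 0 := (sfun_pos x).ne'
  refine h2.congr_deriv (Eq.symm ?_)
  unfold sfun
  field_simp

lemma phi_hasDeriv (k b : ℝ) (hb : 0 < b) (x : ℝ) :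
    HasDerivAt (fun y => k * y / (b + sfun y))
      (k * (b + 1 / sfun x) / (b + sfun x) ^ 2) x := by
  have hs := sfun_hasDeriv x
  have hden : b + sfun x ≠ 0 := (add_pos hb (sfun_pos x)).ne'
  have hnum : HasDerivAt (fun y : ℝ => k * y) k x := by
    simpa using (hasDerivAt_id x).const_mul k
  have h := hnum.div (hs.const_add b) hden
  refine h.congr_deriv (Eq.symm ?_)
  have hsne : sfun x ≠ 0 := (sfun_pos x).ne'
  have hsq := sfun_sq x
  field_simp
  linear_combination (-k) * hsq

lemma a_pos_facts {a : ℝ} (ha : a ≥ 2 / Real.pi) : 0 < a ∧ 0 < a ^ 2 + a - 1 := by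
  have h2 := Real.pi_lt_d2
  have hpi := Real.pi_pos
  have haπ : a * Real.pi ≥ 2 := (div_le_iff₀ hpi).1 ha
  have ha0 : 0 < a := by nlinarith
  have ha40 : a ≥ 40 / 63 := by nlinarith
  exact ⟨ha0, by nlinarith⟩

lemma upper_bound (a : ℝ) (ha : a ≥ 2 / Real.pi) (x : ℝ) (hx : 0 < x) :
    Real.arctan x < (1 + a) * x / (a + sfun x) := by
  obtain ⟨ha0, ha2⟩ := a_pos_facts ha
  set F : ℝ → ℝ := fun y => (1 + a) * y / (a + sfun y) - Real.arctan y with hF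
  have hFd : ∀ y : ℝ, HasDerivAt F
      ((1 + a) * (a + 1 / sfun y) / (a + sfun y) ^ 2 - 1 / (1 + y ^ 2)) y :=
    fun y => (phi_hasDeriv (1 + a) a ha0 y).sub (Real.hasDerivAt_arctan y)
  have hmono : StrictMonoOn F (Ici 0) := by
    apply strictMonoOn_of_deriv_pos (convex_Ici 0)
    · exact fun y _ => (hFd y).differentiableAt.continuousAt.continuousWithinAt
    · intro y hy
      rw [interior_Ici] at hy
      rw [(hFd y).deriv]
      have hs1 : 1 < sfun y := one_lt_sfun hy
      have hsq := sfun_sq y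
      have hs0 := sfun_pos y
      rw [sub_pos, div_lt_div_iff₀ (by positivity) (by positivity)]
      have hrw : (1 + a) * (a + 1 / sfun y) * (1 + y ^ 2)
          = (1 + a) * (a * sfun y ^ 2 + sfun y) := by
        rw [← hsq]; field_simp
      rw [hrw]
      have hkey : 0 < (sfun y - 1) * ((a ^ 2 + a - 1) * sfun y + a ^ 2) := by
        apply mul_pos (by linarith)
        nlinarith
      nlinarith
  have hF0 : F 0 = 0 := by
    simp [hF, sfun, Real.sqrt_one]
  have := hmono (self_mem_Ici) (mem_Ici.2 hx.le) hx
  rw [hF0] at this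
  simpa [hF, sub_pos] using this

set_option maxHeartbeats 1000000 in
lemma lower_bound (x : ℝ) (hx : 0 < x) :
    Real.pi / 2 * x / (2 / Real.pi + sfun x) < Real.arctan x := by
  have hpi := Real.pi_pos
  have hpi3 := Real.pi_gt_three
  have hpi315 := Real.pi_lt_d2
  set c : ℝ := 2 / Real.pi with hcdef
  have hc0 : 0 < c := by positivity
  have hcπ : c * Real.pi = 2 := by
    rw [hcdef, div_mul_cancel₀ _ hpi.ne']
  have hc1 : Real.pi / 2 * c = 1 := by
    rw [hcdef]; field_simp
  have hc40 : c > 40 / 63 := by nlinarith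
  have hd : 0 < Real.pi / 2 - 2 * c := by nlinarith
  set s1 : ℝ := c ^ 2 / (Real.pi / 2 - 2 * c) with hs1def
  have hs1_gt : 1 < s1 := by
    rw [hs1def, lt_div_iff₀ hd]
    nlinarith
  set x1 : ℝ := Real.sqrt (s1 ^ 2 - 1) with hx1def
  have hx1 : 0 < x1 := Real.sqrt_pos.2 (by nlinarith)
  have hx1sq : x1 ^ 2 = s1 ^ 2 - 1 := Real.sq_sqrt (by nlinarith)
  have hsfx1 : sfun x1 = s1 := by
    unfold sfun
    rw [show 1 + x1 ^ 2 = s1 ^ 2 by rw [hx1sq]; ring,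
      Real.sqrt_sq (by linarith : (0:ℝ) ≤ s1)]
  set G : ℝ → ℝ := fun y => Real.arctan y - Real.pi / 2 * y / (c + sfun y) with hG
  have hGd : ∀ y : ℝ, HasDerivAt G
      (1 / (1 + y ^ 2) - Real.pi / 2 * (c + 1 / sfun y) / (c + sfun y) ^ 2) y :=
    fun y => (Real.hasDerivAt_arctan y).sub (phi_hasDeriv (Real.pi / 2) c hc0 y)
  -- sign analysis of the derivative
  have hsign : ∀ y : ℝ, (sfun y < s1 →
        0 < 1 / (1 + y ^ 2) - Real.pi / 2 * (c + 1 / sfun y) / (c + sfun y) ^ 2) ∧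
      (s1 < sfun y →
        1 / (1 + y ^ 2) - Real.pi / 2 * (c + 1 / sfun y) / (c + sfun y) ^ 2 < 0) := by
    intro y
    have hsq := sfun_sq y
    have hs0 := sfun_pos y
    have hrw : Real.pi / 2 * (c + 1 / sfun y) * (1 + y ^ 2)
        = (Real.pi / 2 * c) * sfun y ^ 2 + Real.pi / 2 * sfun y := by
      rw [← hsq]; field_simp
    rw [hc1] at hrw
    constructor
    · intro hlt
      have hkey : sfun y * (Real.pi / 2 - 2 * c) < c ^ 2 :=
        (lt_div_iff₀ hd).1 (by rwa [← hs1def])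
      rw [sub_pos, div_lt_div_iff₀ (by positivity) (by positivity), hrw]
      nlinarith
    · intro hgt
      have hkey : c ^ 2 < sfun y * (Real.pi / 2 - 2 * c) :=
        (div_lt_iff₀ hd).1 (by rwa [← hs1def])
      rw [sub_neg, div_lt_div_iff₀ (by positivity) (by positivity), hrw]
      nlinarith
  have hcont : ∀ y : ℝ, ContinuousAt G y :=
    fun y => (hGd y).differentiableAt.continuousAt
  have hmono : StrictMonoOn G (Icc 0 x1) := by
    apply strictMonoOn_of_deriv_pos (convex_Icc 0 x1)
    · exact fun y _ => (hcont y).continuousWithinAt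
    · intro y hy
      rw [interior_Icc] at hy
      rw [(hGd y).deriv]
      apply (hsign y).1
      rw [← hsfx1]
      unfold sfun
      exact Real.sqrt_lt_sqrt (by positivity) (by nlinarith [hy.1, hy.2])
  have hanti : StrictAntiOn G (Ici x1) := by
    apply strictAntiOn_of_deriv_neg (convex_Ici x1)
    · exact fun y _ => (hcont y).continuousWithinAt
    · intro y hy
      rw [interior_Ici] at hy
      rw [(hGd y).deriv]
      apply (hsign y).2
      rw [← hsfx1]
      unfold sfun
      exact Real.sqrt_lt_sqrt (by positivity) (by nlinarith [mem_Ioi.1 hy, hx1])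
  have hG0 : G 0 = 0 := by simp [hG, sfun, Real.sqrt_one]
  -- limit of G at infinity is 0
  have l1 : Tendsto (fun y : ℝ => c / y) atTop (𝓝 0) := by
    simpa [div_eq_mul_inv] using tendsto_inv_atTop_zero.const_mul c
  have l2 : Tendsto (fun y : ℝ => Real.sqrt (1 / y ^ 2 + 1)) atTop (𝓝 1) := by
    have h0 : Tendsto (fun y : ℝ => 1 / y ^ 2 + 1) atTop (𝓝 (0 + 1)) := by
      refine Tendsto.add_const 1 ?_
      have hp : Tendsto (fun y : ℝ => y ^ 2) atTop atTop :=
        tendsto_pow_atTop (by norm_num)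
      simpa [one_div, Function.comp_def] using tendsto_inv_atTop_zero.comp hp
    have := (Real.continuous_sqrt.tendsto (0 + 1)).comp h0
    simpa [Function.comp_def] using this
  have l3 : Tendsto (fun y : ℝ => c / y + Real.sqrt (1 / y ^ 2 + 1)) atTop (𝓝 1) := by
    simpa using l1.add l2
  have l4 : Tendsto (fun y : ℝ => (c / y + Real.sqrt (1 / y ^ 2 + 1))⁻¹) atTop (𝓝 1) := by
    simpa using l3.inv₀ one_ne_zero
  have l5 : (fun y : ℝ => (c / y + Real.sqrt (1 / y ^ 2 + 1))⁻¹)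
      =ᶠ[atTop] fun y => y / (c + sfun y) := by
    filter_upwards [eventually_gt_atTop (0:ℝ)] with y hy
    have h1 : Real.sqrt (1 / y ^ 2 + 1) = sfun y / y := by
      rw [show 1 / y ^ 2 + 1 = (1 + y ^ 2) / y ^ 2 by field_simp,
        Real.sqrt_div (by positivity), Real.sqrt_sq hy.le]
      rfl
    rw [h1, ← add_div, inv_div]
  have l6 : Tendsto (fun y : ℝ => Real.pi / 2 * y / (c + sfun y)) atTop (𝓝 (Real.pi / 2)) := by
    have := (l4.congr' l5).const_mul (Real.pi / 2)
    simpa [mul_div_assoc] using this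
  have hGlim : Tendsto G atTop (𝓝 0) := by
    have h := (Real.tendsto_arctan_atTop.mono_right nhdsWithin_le_nhds).sub l6
    rw [sub_self] at h
    exact h
  -- conclude G x > 0
  have hGx : 0 < G x := by
    rcases le_or_gt x x1 with hle | hgt
    · have := hmono (left_mem_Icc.2 hx1.le) (mem_Icc.2 ⟨hx.le, hle⟩) hx
      rwa [hG0] at this
    · have hxi : x ∈ Ici x1 := mem_Ici.2 hgt.le
      have hstep : G (x + 1) < G x := hanti hxi (mem_Ici.2 (by linarith)) (lt_add_one x)
      have hnn : 0 ≤ G (x + 1) := by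
        apply le_of_tendsto hGlim
        filter_upwards [eventually_ge_atTop (x + 1)] with y hy
        exact hanti.antitoneOn (mem_Ici.2 (by linarith)) (mem_Ici.2 (by linarith)) hy
      linarith
  simpa [hG, sub_pos] using hGx

theorem arctan_bounds_of_ge (a : ℝ) (ha : a ≥ 2 / Real.pi) (x : ℝ) (hx : 0 < x) :
    (Real.pi / 2) * x / (a + Real.sqrt (1 + x ^ 2)) < Real.arctan x ∧
      Real.arctan x < (1 + a) * x / (a + Real.sqrt (1 + x ^ 2)) := by
  have hpi := Real.pi_pos
  have hs : Real.sqrt (1 + x ^ 2) = sfun x := rfl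
  have hc0 : (0:ℝ) < 2 / Real.pi := by positivity
  constructor
  · have h1 : Real.pi / 2 * x / (a + sfun x) ≤ Real.pi / 2 * x / (2 / Real.pi + sfun x) := by
      apply div_le_div_of_nonneg_left (by nlinarith) (add_pos hc0 (sfun_pos x))
      linarith
    calc Real.pi / 2 * x / (a + Real.sqrt (1 + x ^ 2))
        ≤ Real.pi / 2 * x / (2 / Real.pi + sfun x) := by rw [hs]; exact h1
      _ < Real.arctan x := lower_bound x hx
  · rw [hs]
    exact upper_bound a ha x hx
end

section
/- (Shafer's inequality) For every x > 0, one has arctan x > 3x/(1 + 2√(1 + x²)). -/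
open Real Set

lemma shafer_deriv (y : ℝ) :
    HasDerivAt (fun t : ℝ => Real.arctan t - 3 * t / (1 + 2 * Real.sqrt (1 + t ^ 2)))
      ((Real.sqrt (1 + y ^ 2) - 1) ^ 2 /
        ((1 + y ^ 2) * (1 + 2 * Real.sqrt (1 + y ^ 2)) ^ 2)) y := by
  have h1 : (0:ℝ) < 1 + y ^ 2 := by positivity
  have hs : 0 < Real.sqrt (1 + y ^ 2) := Real.sqrt_pos.2 h1
  have hsq : Real.sqrt (1 + y ^ 2) ^ 2 = 1 + y ^ 2 := Real.sq_sqrt h1.le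
  have hin : HasDerivAt (fun t : ℝ => 1 + t ^ 2) (2 * y) y := by
    simpa using ((hasDerivAt_pow 2 y).const_add 1)
  have hsqrt : HasDerivAt (fun t : ℝ => Real.sqrt (1 + t ^ 2))
      (2 * y / (2 * Real.sqrt (1 + y ^ 2))) y := hin.sqrt h1.ne'
  have hv : HasDerivAt (fun t : ℝ => 1 + 2 * Real.sqrt (1 + t ^ 2))
      (2 * (2 * y / (2 * Real.sqrt (1 + y ^ 2)))) y := (hsqrt.const_mul 2).const_add 1
  have hu : HasDerivAt (fun t : ℝ => 3 * t) 3 y := by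
    simpa using (hasDerivAt_id y).const_mul 3
  have hvne : (1 : ℝ) + 2 * Real.sqrt (1 + y ^ 2) ≠ 0 := by positivity
  have hq := hu.div hv hvne
  have h := (Real.hasDerivAt_arctan y).sub hq
  convert h using 1
  iterate 3 rfl
  set s := Real.sqrt (1 + y ^ 2) with hsdef
  have hsne : s ≠ 0 := hs.ne'
  have hrw : 3 * y * (2 * (2 * y / (2 * s))) = 6 * (s ^ 2 - 1) / s := by
    rw [hsq]; field_simp; ring
  rw [hrw, ← hsq]
  have hd : (1 : ℝ) + 2 * s ≠ 0 := by positivity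
  field_simp
  ring

theorem shafer_inequality (x : ℝ) (hx : 0 < x) :
    Real.arctan x > 3 * x / (1 + 2 * Real.sqrt (1 + x ^ 2)) := by
  set g : ℝ → ℝ := fun t => Real.arctan t - 3 * t / (1 + 2 * Real.sqrt (1 + t ^ 2)) with hg
  have hmono : StrictMonoOn g (Set.Ici (0 : ℝ)) := by
    apply strictMonoOn_of_deriv_pos (convex_Ici 0)
    · exact fun y _ => ((shafer_deriv y).differentiableAt.continuousAt).continuousWithinAt
    · intro y hy
      rw [interior_Ici] at hy
      rw [(shafer_deriv y).deriv]
      have h1 : (0:ℝ) < 1 + y ^ 2 := by positivity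
      have hs1 : 1 < Real.sqrt (1 + y ^ 2) := by
        nlinarith [Real.sq_sqrt h1.le, Real.sqrt_nonneg (1 + y ^ 2), Set.mem_Ioi.1 hy]
      have h2 : (0:ℝ) < Real.sqrt (1 + y ^ 2) - 1 := by linarith
      exact div_pos (pow_pos h2 2) (by positivity)
  have h0 : g 0 = 0 := by simp [hg]
  have := hmono (Set.self_mem_Ici) (Set.mem_Ici.2 hx.le) hx
  rw [h0] at this
  simpa [hg, sub_pos] using this
end

section
/- For every x > 0, one has arctan x < 2x/(1 + √(1 + x²)). -/
open Real

theorem arctan_lt_two_x (x : ℝ) (hx : 0 < x) :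
    Real.arctan x < 2 * x / (1 + Real.sqrt (1 + x ^ 2)) := by
  set s := Real.sqrt (1 + x ^ 2) with hsdef
  have hs0 : 0 ≤ s := Real.sqrt_nonneg _
  have hs2 : s ^ 2 = 1 + x ^ 2 := Real.sq_sqrt (by positivity)
  have hs1 : 1 ≤ s := by nlinarith
  set y := x / (1 + s) with hydef
  have hy0 : 0 < y := by positivity
  have hy1 : y < 1 := by
    rw [hydef, div_lt_one (by linarith)]
    nlinarith
  have hay : Real.arctan y < π / 4 := by
    calc Real.arctan y < Real.arctan 1 := Real.arctan_strictMono hy1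
    _ = π / 4 := Real.arctan_one
  have hay0 : 0 < Real.arctan y := by simpa using Real.arctan_strictMono hy0
  have h1s : (0 : ℝ) < 1 + s := by linarith
  have hden : 1 - y ^ 2 = 2 / (1 + s) := by
    rw [hydef]; field_simp; nlinarith
  have htan : Real.tan (2 * Real.arctan y) = x := by
    rw [Real.tan_two_mul, Real.tan_arctan, hden, hydef]
    field_simp
  have hkey : Real.arctan x = 2 * Real.arctan y := by
    rw [← htan, Real.arctan_tan (by linarith [Real.pi_pos]) (by linarith)]
  have hlt : Real.arctan y < y := by
    calc Real.arctan y < Real.tan (Real.arctan y) :=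
      Real.lt_tan hay0 (by linarith [Real.pi_pos])
    _ = y := Real.tan_arctan y
  rw [hkey]
  have : 2 * x / (1 + s) = 2 * y := by rw [hydef]; ring
  rw [this]
  linarith
end

section
/- Let a be a real number with 0 ≤ a ≤ 1/2, and define g_a(x) = (x + x³ + a·x·√(1 + x²))/((1 + x²)(1 + a·√(1 + x²))) − arctan x for x > 0. Then g_a is increasing on (0, ∞), and consequently g_a(x) > 0 for all x > 0. -/
lemma shafer_hasDerivAt (a : ℝ) (ha0 : 0 ≤ a) (x : ℝ) :
    HasDerivAt (fun x : ℝ => (x + x ^ 3 + a * x * Real.sqrt (1 + x ^ 2)) /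
        ((1 + x ^ 2) * (1 + a * Real.sqrt (1 + x ^ 2))) - Real.arctan x)
      (x ^ 2 * ((1 - 2 * a ^ 2) * Real.sqrt (1 + x ^ 2) - a) /
        ((Real.sqrt (1 + x ^ 2)) ^ 3 * (1 + a * Real.sqrt (1 + x ^ 2)) ^ 2)) x := by
  set s := Real.sqrt (1 + x ^ 2) with hsdef
  have h1x2 : (0:ℝ) < 1 + x ^ 2 := by positivity
  have hs2 : s ^ 2 = 1 + x ^ 2 := Real.sq_sqrt h1x2.le
  have hs0 : 0 ≤ s := Real.sqrt_nonneg _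
  have hspos : 0 < s := by nlinarith
  have has : 0 < 1 + a * s := by nlinarith [mul_nonneg ha0 hs0]
  have hinner : HasDerivAt (fun x : ℝ => 1 + x ^ 2) (2 * x) x := by
    simpa using ((hasDerivAt_pow 2 x).const_add 1)
  have hsqrt : HasDerivAt (fun x : ℝ => Real.sqrt (1 + x ^ 2)) (x / s) x := by
    have := (Real.hasDerivAt_sqrt h1x2.ne').comp x hinner
    refine this.congr_deriv ?_
    rw [← hsdef]
    field_simp
  have hn : HasDerivAt (fun x : ℝ => x + x ^ 3 + a * x * Real.sqrt (1 + x ^ 2))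
      (1 + 3 * x ^ 2 + a * (1 * s + x * (x / s))) x := by
    have h3 : HasDerivAt (fun x : ℝ => x ^ 3) (3 * x ^ 2) x := by
      simpa using hasDerivAt_pow 3 x
    have hxid : HasDerivAt (fun x : ℝ => x) 1 x := hasDerivAt_id x
    have hmul : HasDerivAt (fun x : ℝ => x * Real.sqrt (1 + x ^ 2)) (1 * s + x * (x / s)) x :=
      hxid.mul hsqrt
    have := (hxid.add h3).add (hmul.const_mul a)
    refine (this.congr_deriv ?_).congr_of_eventuallyEq (Filter.Eventually.of_forall fun y => by simp only [Pi.add_apply]; ring)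
    all_goals try funext y
    all_goals ring
  have hm : HasDerivAt (fun x : ℝ => (1 + x ^ 2) * (1 + a * Real.sqrt (1 + x ^ 2)))
      (2 * x * (1 + a * s) + (1 + x ^ 2) * (a * (x / s))) x :=
    hinner.mul ((hsqrt.const_mul a).const_add 1)
  have hm0 : (1 + x ^ 2) * (1 + a * s) ≠ 0 := by positivity
  have hfull := (hn.div hm hm0).sub (Real.hasDerivAt_arctan x)
  refine hfull.congr_deriv ?_
  rw [← hsdef, ← hs2]
  field_simp
  linear_combination (x ^ 2 * (2 + 3 * a * s)) * hs2

theorem shafer_g_mono_and_pos (a : ℝ) (ha0 : 0 ≤ a) (ha1 : a ≤ 1 / 2) :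
    MonotoneOn
      (fun x : ℝ => (x + x ^ 3 + a * x * Real.sqrt (1 + x ^ 2)) /
        ((1 + x ^ 2) * (1 + a * Real.sqrt (1 + x ^ 2))) - Real.arctan x)
      (Set.Ioi (0 : ℝ)) ∧
    ∀ x : ℝ, 0 < x →
      0 < (x + x ^ 3 + a * x * Real.sqrt (1 + x ^ 2)) /
        ((1 + x ^ 2) * (1 + a * Real.sqrt (1 + x ^ 2))) - Real.arctan x := by
  have key : StrictMonoOn
      (fun x : ℝ => (x + x ^ 3 + a * x * Real.sqrt (1 + x ^ 2)) /
        ((1 + x ^ 2) * (1 + a * Real.sqrt (1 + x ^ 2))) - Real.arctan x)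
      (Set.Ici (0 : ℝ)) := by
    apply strictMonoOn_of_deriv_pos (convex_Ici 0)
    · exact fun x _ => (shafer_hasDerivAt a ha0 x).differentiableAt.continuousAt.continuousWithinAt
    · intro x hx
      rw [interior_Ici] at hx
      rw [(shafer_hasDerivAt a ha0 x).deriv]
      have h1x2 : (0:ℝ) < 1 + x ^ 2 := by positivity
      set s := Real.sqrt (1 + x ^ 2) with hsdef
      have hs2 : s ^ 2 = 1 + x ^ 2 := Real.sq_sqrt h1x2.le
      have hs0 : 0 ≤ s := Real.sqrt_nonneg _
      have hs1 : 1 < s := by nlinarith [hx, mul_pos (Set.mem_Ioi.mp hx) (Set.mem_Ioi.mp hx)]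
      have ha2 : a ^ 2 ≤ 1 / 4 := by nlinarith
      have hnum : 0 < (1 - 2 * a ^ 2) * s - a := by nlinarith [mul_pos (show (0:ℝ) < 1 - 2 * a ^ 2 by nlinarith) (sub_pos.mpr hs1)]
      have hden : 0 < s ^ 3 * (1 + a * s) ^ 2 := by positivity
      exact div_pos (mul_pos (pow_pos (Set.mem_Ioi.mp hx) 2) hnum) hden
  refine ⟨(key.monotoneOn).mono (Set.Ioi_subset_Ici le_rfl), fun x hx => ?_⟩
  have h0 : ((0:ℝ) + 0 ^ 3 + a * 0 * Real.sqrt (1 + 0 ^ 2)) /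
      ((1 + 0 ^ 2) * (1 + a * Real.sqrt (1 + 0 ^ 2))) - Real.arctan 0 = 0 := by
    norm_num
  have := key (Set.self_mem_Ici) (Set.mem_Ici.mpr hx.le) hx
  simp only [h0] at this
  simpa using this
end

section
/- Let a be a real number with 2/π ≤ a < √2/2, and define g_a(x) = (x + x³ + a·x·√(1 + x²))/((1 + x²)(1 + a·√(1 + x²))) − arctan x for x > 0. Then g_a(x) < 0 for all x > 0. -/
open Real

private lemma sinc_lt {u v : ℝ} (hu : 0 < u) (huv : u < v) (hv : v ≤ Real.pi) :
    u * Real.sin v < v * Real.sin u := by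
  have hv0 : 0 < v := hu.trans huv
  have hb : 0 < u / v := div_pos hu hv0
  have ha : 0 < 1 - u / v := by
    have : u / v < 1 := (div_lt_one hv0).2 huv
    linarith
  have := strictConcaveOn_sin_Icc.2 (x := 0) (y := v)
    ⟨le_rfl, Real.pi_pos.le⟩ ⟨hv0.le, hv⟩ hv0.ne ha hb (by ring)
  simp only [smul_eq_mul, Real.sin_zero, mul_zero, zero_add] at this
  have hx : u / v * v = u := by field_simp
  rw [hx] at this
  have h2 := (mul_lt_mul_iff_right₀ hv0).2 this
  calc u * Real.sin v = v * (u / v * Real.sin v) := by field_simp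
    _ < v * Real.sin u := h2

private lemma F_pos (a : ℝ) (ha1 : 2 / Real.pi ≤ a) {θ : ℝ} (hθ0 : 0 < θ)
    (hθ2 : θ < Real.pi / 2) :
    Real.sin θ * (1 + a * Real.cos θ) < θ * (Real.cos θ + a) := by
  set F : ℝ → ℝ := fun t => t * (Real.cos t + a) - Real.sin t * (1 + a * Real.cos t) with hF
  have hpi := Real.pi_pos
  have ha0 : 0 < a := lt_of_lt_of_le (div_pos two_pos hpi) ha1
  have hderiv : ∀ t : ℝ, HasDerivAt F (Real.sin t * (2 * a * Real.sin t - t)) t := by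
    intro t
    have h1 : HasDerivAt (fun t : ℝ => t * (Real.cos t + a))
        (1 * (Real.cos t + a) + t * (-Real.sin t)) t :=
      (hasDerivAt_id t).mul ((Real.hasDerivAt_cos t).add_const a)
    have h2 : HasDerivAt (fun t : ℝ => Real.sin t * (1 + a * Real.cos t))
        (Real.cos t * (1 + a * Real.cos t) + Real.sin t * (a * -Real.sin t)) t :=
      (Real.hasDerivAt_sin t).mul (((Real.hasDerivAt_cos t).const_mul a).const_add 1)
    have := h1.sub h2
    refine this.congr_deriv ?_
    have hsc := Real.sin_sq_add_cos_sq t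
    linear_combination (-a) * hsc
  have hderiv' : ∀ t : ℝ, deriv F t = Real.sin t * (2 * a * Real.sin t - t) :=
    fun t => (hderiv t).deriv
  have hcont : Continuous F := by
    apply Continuous.sub
    · exact continuous_id.mul (Real.continuous_cos.add continuous_const)
    · exact Real.continuous_sin.mul (continuous_const.add (continuous_const.mul Real.continuous_cos))
  have hθpi : θ ≤ Real.pi := by linarith
  have key : 0 < F θ := by
    rcases le_or_gt θ (2 * a * Real.sin θ) with hcase | hcase
    · -- F strictly increasing on [0, θ]
      have hmono : StrictMonoOn F (Set.Icc 0 θ) := by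
        apply strictMonoOn_of_deriv_pos (convex_Icc 0 θ) hcont.continuousOn
        intro t ht
        rw [interior_Icc] at ht
        obtain ⟨ht0, htθ⟩ := ht
        rw [hderiv']
        have hsint : 0 < Real.sin t := Real.sin_pos_of_pos_of_lt_pi ht0 (by linarith)
        have hsinθ : 0 < Real.sin θ := Real.sin_pos_of_pos_of_lt_pi hθ0 (by linarith)
        have h := sinc_lt ht0 htθ hθpi
        have hlt : t < 2 * a * Real.sin t := by
          have h2 : t * (2 * a * Real.sin θ) < (2 * a * Real.sin t) * θ := by
            nlinarith
          nlinarith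
        have : 0 < 2 * a * Real.sin t - t := by linarith
        positivity
      have h0 : F 0 = 0 := by simp [hF]
      have h01 := hmono (Set.left_mem_Icc.2 hθ0.le) (Set.mem_Icc.2 ⟨hθ0.le, le_rfl⟩) hθ0
      rw [h0] at h01
      exact h01
    · -- F strictly decreasing on [θ, π/2]
      have hanti : StrictAntiOn F (Set.Icc θ (Real.pi / 2)) := by
        apply strictAntiOn_of_deriv_neg (convex_Icc θ (Real.pi / 2)) hcont.continuousOn
        intro t ht
        rw [interior_Icc] at ht
        obtain ⟨htθ, ht2⟩ := ht
        rw [hderiv']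
        have ht0 : 0 < t := hθ0.trans htθ
        have hsint : 0 < Real.sin t := Real.sin_pos_of_pos_of_lt_pi ht0 (by linarith)
        have hsinθ : 0 < Real.sin θ := Real.sin_pos_of_pos_of_lt_pi hθ0 (by linarith)
        have h := sinc_lt hθ0 htθ (by linarith)
        have h2 : 2 * a * Real.sin t < t := by
          have : θ * (2 * a * Real.sin t) < t * (2 * a * Real.sin θ) := by nlinarith
          nlinarith
        nlinarith
      have hFpi2 : 0 ≤ F (Real.pi / 2) := by
        have hFv : F (Real.pi / 2) = Real.pi / 2 * a - 1 := by
          simp [hF, Real.cos_pi_div_two, Real.sin_pi_div_two]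
        have h2pi : 2 ≤ a * Real.pi := by
          rw [div_le_iff₀ hpi] at ha1; linarith
        rw [hFv]; nlinarith
      have hlt := hanti (Set.mem_Icc.2 ⟨le_rfl, hθ2.le⟩)
        (Set.right_mem_Icc.2 (by linarith)) hθ2
      exact hFpi2.trans_lt hlt
  have : 0 < θ * (Real.cos θ + a) - Real.sin θ * (1 + a * Real.cos θ) := key
  linarith

theorem shafer_g_neg (a : ℝ) (ha1 : 2 / Real.pi ≤ a) (ha2 : a < Real.sqrt 2 / 2) :
    ∀ x : ℝ, 0 < x →
      (x + x ^ 3 + a * x * Real.sqrt (1 + x ^ 2)) /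
        ((1 + x ^ 2) * (1 + a * Real.sqrt (1 + x ^ 2))) - Real.arctan x < 0 := by
  intro x hx
  have hpi := Real.pi_pos
  have ha0 : 0 < a := lt_of_lt_of_le (div_pos two_pos hpi) ha1
  set s := Real.sqrt (1 + x ^ 2) with hs_def
  have hs2 : s ^ 2 = 1 + x ^ 2 := Real.sq_sqrt (by positivity)
  have hs : 0 < s := Real.sqrt_pos.2 (by positivity)
  set θ := Real.arctan x with hθ_def
  have hθ0 : 0 < θ := by
    rw [hθ_def, ← Real.arctan_zero]
    exact Real.arctan_strictMono hx
  have hθ2 : θ < Real.pi / 2 := Real.arctan_lt_pi_div_two x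
  have hcos : Real.cos θ = 1 / s := Real.cos_arctan x
  have hsin : Real.sin θ = x / s := Real.sin_arctan x
  have key := F_pos a ha1 hθ0 hθ2
  rw [hcos, hsin] at key
  -- key : x/s * (1 + a * (1/s)) < θ * (1/s + a)
  have h3 : (0:ℝ) < s ^ 3 := by positivity
  have key2 : x * s ^ 2 + a * x * s < θ * s ^ 2 + a * θ * s ^ 3 := by
    have hmul := (mul_lt_mul_iff_right₀ h3).2 key
    have e1 : s ^ 3 * (x / s * (1 + a * (1 / s))) = x * s ^ 2 + a * x * s := by
      field_simp
    have e2 : s ^ 3 * (θ * (1 / s + a)) = θ * s ^ 2 + a * θ * s ^ 3 := by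
      field_simp
    rwa [e1, e2] at hmul
  have hden : 0 < (1 + x ^ 2) * (1 + a * s) := by positivity
  rw [sub_neg, div_lt_iff₀ hden]
  have hrw : (1 + x ^ 2) * (1 + a * s) = s ^ 2 + a * s ^ 3 := by
    rw [← hs2]; ring
  have hx3 : x * s ^ 2 = x + x ^ 3 := by rw [hs2]; ring
  rw [hrw]
  linarith [key2, hx3]
end

section
/- The function a₁(x) = −(1 + √(9 + 8x²))/(4√(1 + x²)) is strictly increasing on (0, ∞), with a₁(x) → −1 as x → 0⁺ and a₁(x) → −√2/2 as x → ∞. -/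
open Real Filter

private lemma a1_key (x : ℝ) :
    -(1 + Real.sqrt (9 + 8 * x ^ 2)) / (4 * Real.sqrt (1 + x ^ 2)) =
    -(1/4) * (1 / Real.sqrt (1 + x ^ 2) + Real.sqrt (8 + 1 / (1 + x ^ 2))) := by
  have hu : (0:ℝ) < 1 + x ^ 2 := by positivity
  have hs : 0 < Real.sqrt (1 + x ^ 2) := Real.sqrt_pos.mpr hu
  have h1 : (9 + 8 * x ^ 2 : ℝ) = (1 + x ^ 2) * (8 + 1 / (1 + x ^ 2)) := by
    field_simp; ring
  have h2 : Real.sqrt (9 + 8 * x ^ 2)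
      = Real.sqrt (1 + x ^ 2) * Real.sqrt (8 + 1 / (1 + x ^ 2)) := by
    rw [h1, Real.sqrt_mul hu.le]
  rw [h2]
  field_simp

theorem a1_strictMono_and_limits :
    StrictMonoOn (fun x : ℝ => -(1 + Real.sqrt (9 + 8 * x ^ 2)) / (4 * Real.sqrt (1 + x ^ 2)))
      (Set.Ioi (0 : ℝ)) ∧
    Filter.Tendsto (fun x : ℝ => -(1 + Real.sqrt (9 + 8 * x ^ 2)) / (4 * Real.sqrt (1 + x ^ 2)))
      (nhdsWithin 0 (Set.Ioi 0)) (nhds (-1)) ∧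
    Filter.Tendsto (fun x : ℝ => -(1 + Real.sqrt (9 + 8 * x ^ 2)) / (4 * Real.sqrt (1 + x ^ 2)))
      Filter.atTop (nhds (-(Real.sqrt 2 / 2))) := by
  refine ⟨?_, ?_, ?_⟩
  · -- strict monotone
    intro a ha b hb hab
    simp only [Set.mem_Ioi] at ha hb
    simp only
    rw [a1_key a, a1_key b]
    have hua : (0:ℝ) < 1 + a ^ 2 := by positivity
    have hub : (0:ℝ) < 1 + b ^ 2 := by positivity
    have huab : 1 + a ^ 2 < 1 + b ^ 2 := by nlinarith
    have hsa : 0 < Real.sqrt (1 + a ^ 2) := Real.sqrt_pos.mpr hua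
    have hsab : Real.sqrt (1 + a ^ 2) < Real.sqrt (1 + b ^ 2) :=
      Real.sqrt_lt_sqrt hua.le huab
    have h1 : 1 / Real.sqrt (1 + b ^ 2) < 1 / Real.sqrt (1 + a ^ 2) :=
      one_div_lt_one_div_of_lt hsa hsab
    have h2 : Real.sqrt (8 + 1 / (1 + b ^ 2)) < Real.sqrt (8 + 1 / (1 + a ^ 2)) := by
      apply Real.sqrt_lt_sqrt (by positivity)
      have := one_div_lt_one_div_of_lt hua huab
      linarith
    nlinarith [h1, h2]
  · -- limit at 0⁺
    have hc : ContinuousAt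
        (fun x : ℝ => -(1 + Real.sqrt (9 + 8 * x ^ 2)) / (4 * Real.sqrt (1 + x ^ 2))) 0 := by
      apply ContinuousAt.div
      · fun_prop
      · fun_prop
      · norm_num [Real.sqrt_one]
    have h0 : -(1 + Real.sqrt (9 + 8 * (0:ℝ) ^ 2)) / (4 * Real.sqrt (1 + (0:ℝ) ^ 2)) = -1 := by
      have h9 : Real.sqrt 9 = 3 := by
        rw [show (9:ℝ) = 3 ^ 2 by norm_num, Real.sqrt_sq (by norm_num)]
      norm_num [h9, Real.sqrt_one]
    have := hc.tendsto.mono_left (nhdsWithin_le_nhds (s := Set.Ioi 0))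
    rwa [h0] at this
  · -- limit at ∞
    have heq : (fun x : ℝ => -(1 + Real.sqrt (9 + 8 * x ^ 2)) / (4 * Real.sqrt (1 + x ^ 2)))
        = fun x : ℝ => -(1/4) * (1 / Real.sqrt (1 + x ^ 2) + Real.sqrt (8 + 1 / (1 + x ^ 2))) :=
      funext a1_key
    rw [heq]
    have hinf : Tendsto (fun x : ℝ => 1 + x ^ 2) atTop atTop :=
      tendsto_atTop_add_const_left _ _ (tendsto_pow_atTop two_ne_zero)
    have h0 : Tendsto (fun x : ℝ => 1 / (1 + x ^ 2)) atTop (nhds 0) := by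
      simpa [one_div, Pi.inv_def] using hinf.inv_tendsto_atTop
    have hsq : Tendsto (fun x : ℝ => 1 / Real.sqrt (1 + x ^ 2)) atTop (nhds 0) := by
      have h' : Tendsto (fun x : ℝ => Real.sqrt (1 / (1 + x ^ 2))) atTop
          (nhds (Real.sqrt 0)) := (Real.continuous_sqrt.continuousAt.tendsto).comp h0
      simpa [Real.sqrt_zero, one_div, Real.sqrt_inv] using h'
    have h8 : Tendsto (fun x : ℝ => Real.sqrt (8 + 1 / (1 + x ^ 2))) atTop
        (nhds (Real.sqrt 8)) := by
      have : Tendsto (fun x : ℝ => 8 + 1 / (1 + x ^ 2)) atTop (nhds 8) := by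
        simpa using tendsto_const_nhds.add h0
      exact (Real.continuous_sqrt.continuousAt.tendsto).comp this
    have hcomb := (hsq.add h8).const_mul (-(1/4) : ℝ)
    have h8v : Real.sqrt 8 = 2 * Real.sqrt 2 := by
      rw [show (8:ℝ) = 2 ^ 2 * 2 by norm_num, Real.sqrt_mul (by positivity),
        Real.sqrt_sq (by norm_num)]
    have : -(1/4 : ℝ) * (0 + Real.sqrt 8) = -(Real.sqrt 2 / 2) := by
      rw [h8v]; ring
    rwa [this] at hcomb
end

section
/- For every y with 0 < y < π/2, one has y > 3·sin y/(2 + cos y). -/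
open Real Set

private lemma g_hasDeriv (y : ℝ) :
    HasDerivAt (fun y => 2 - 2 * Real.cos y - y * Real.sin y)
      (Real.sin y - y * Real.cos y) y := by
  have h1 : HasDerivAt (fun y : ℝ => 2 - 2 * Real.cos y) (2 * Real.sin y) y := by
    have := ((Real.hasDerivAt_cos y).const_mul (2:ℝ)).const_sub (2:ℝ)
    convert this using 1 <;> (try simp only [id]) <;> first | rfl | ring
  have h2 : HasDerivAt (fun y : ℝ => y * Real.sin y) (Real.sin y + y * Real.cos y) y := by
    have := (hasDerivAt_id y).mul (Real.hasDerivAt_sin y)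
    convert this using 1 <;> (try simp only [id]) <;> first | rfl | ring
  have := h1.sub h2
  convert this using 1 <;> (try simp only [id]) <;> first | rfl | ring

private lemma f_hasDeriv (y : ℝ) :
    HasDerivAt (fun y => y * (2 + Real.cos y) - 3 * Real.sin y)
      (2 - 2 * Real.cos y - y * Real.sin y) y := by
  have h1 : HasDerivAt (fun y : ℝ => y * (2 + Real.cos y))
      (1 * (2 + Real.cos y) + y * (-Real.sin y)) y :=
    (hasDerivAt_id y).mul ((Real.hasDerivAt_cos y).const_add 2)
  have h2 : HasDerivAt (fun y : ℝ => 3 * Real.sin y) (3 * Real.cos y) y := by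
    have := (Real.hasDerivAt_sin y).const_mul (3:ℝ)
    convert this using 1 <;> (try simp only [id]) <;> first | rfl | ring
  have := h1.sub h2
  convert this using 1 <;> (try simp only [id]) <;> first | rfl | ring

private lemma g_pos {y : ℝ} (hy0 : 0 < y) (hy1 : y < Real.pi / 2) :
    0 < 2 - 2 * Real.cos y - y * Real.sin y := by
  have hmono : StrictMonoOn (fun y => 2 - 2 * Real.cos y - y * Real.sin y)
      (Icc 0 (Real.pi / 2)) := by
    apply strictMonoOn_of_deriv_pos (convex_Icc _ _)
    · exact Continuous.continuousOn (by continuity)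
    · intro x hx
      rw [interior_Icc] at hx
      rw [(g_hasDeriv x).deriv]
      have hcos : 0 < Real.cos x := Real.cos_pos_of_mem_Ioo
        ⟨by linarith [hx.1, Real.pi_pos], hx.2⟩
      have htan : x < Real.tan x := Real.lt_tan hx.1 hx.2
      rw [Real.tan_eq_sin_div_cos, lt_div_iff₀ hcos] at htan
      linarith
  have h0 : (0:ℝ) ∈ Icc (0:ℝ) (Real.pi / 2) := ⟨le_refl _, by positivity⟩
  have hy : y ∈ Icc (0:ℝ) (Real.pi / 2) := ⟨hy0.le, hy1.le⟩
  have := hmono h0 hy hy0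
  simpa using this

theorem trig_shafer (y : ℝ) (hy0 : 0 < y) (hy1 : y < Real.pi / 2) :
    y > 3 * Real.sin y / (2 + Real.cos y) := by
  have hmono : StrictMonoOn (fun y => y * (2 + Real.cos y) - 3 * Real.sin y)
      (Icc 0 (Real.pi / 2)) := by
    apply strictMonoOn_of_deriv_pos (convex_Icc _ _)
    · exact Continuous.continuousOn (by continuity)
    · intro x hx
      rw [interior_Icc] at hx
      rw [(f_hasDeriv x).deriv]
      exact g_pos hx.1 hx.2
  have h0 : (0:ℝ) ∈ Icc (0:ℝ) (Real.pi / 2) := ⟨le_refl _, by positivity⟩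
  have hy : y ∈ Icc (0:ℝ) (Real.pi / 2) := ⟨hy0.le, hy1.le⟩
  have hf : 0 < y * (2 + Real.cos y) - 3 * Real.sin y := by
    have := hmono h0 hy hy0
    simpa using this
  have hcos : (0:ℝ) < 2 + Real.cos y := by nlinarith [Real.neg_one_le_cos y]
  rw [gt_iff_lt, div_lt_iff₀ hcos]
  linarith
end
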